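/- arXiv:2403.10163 — 4 statements merged into one kernel-verified Lean document; each statement's English description precedes it below -/
import Mathlib

section
/- Let G be a graph containing K_{2,n-2} as a spanning subgraph, with the bipartition parts D = {u', u''} of size 2 and R of size n−2. If the set of edges of G inside R together with the edge u'u'' (if present) has cardinality at least 2, then G contains C_{3,3}, the graph formed by two triangles sharing exactly one common vertex, as a subgraph. -/
open SimpleGraph

/-- The adjacency spectral radius of a finite simple graph. -/
noncomputable def specRad {V : Type*} [Fintype V] [DecidableEq V] (G : SimpleGraph V) : ℝ :=
  letI := Classical.decRel G.Adj
  sSup ((fun μ : ℝ => |μ|) '' spectrum ℝ (G.adjMatrix ℝ))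

/-- `G` contains a copy of `H` as a subgraph. -/
def Contains {V W : Type*} (G : SimpleGraph V) (H : SimpleGraph W) : Prop :=
  ∃ f : W ↪ V, ∀ a b, H.Adj a b → G.Adj (f a) (f b)

/-- `G` contains `C_{l,l}`: two cycles of length `l` sharing exactly one vertex. -/
def ContainsCll {V : Type*} (G : SimpleGraph V) (l : ℕ) : Prop :=
  ∃ (u : V) (c₁ c₂ : G.Walk u u), c₁.IsCycle ∧ c₂.IsCycle ∧ c₁.length = l ∧ c₂.length = l ∧
    ∀ v, v ∈ c₁.support → v ∈ c₂.support → v = u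

/-- Theta graph on `k` vertices: the cycle `0,1,…,k-1` plus a chord from `0` to `a`. -/
def thetaGraph (k a : ℕ) : SimpleGraph (Fin k) :=
  SimpleGraph.fromRel (fun i j =>
    (j : ℕ) = (i : ℕ) + 1 ∨ ((i : ℕ) = k - 1 ∧ (j : ℕ) = 0) ∨ ((i : ℕ) = 0 ∧ (j : ℕ) = a))

/-- `G` contains some member of `Θ_k`, the set of Theta graphs on `k` vertices. -/
def ContainsTheta {V : Type*} (G : SimpleGraph V) (k : ℕ) : Prop :=
  ∃ a, 2 ≤ a ∧ a ≤ k - 2 ∧ Contains G (thetaGraph k a)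

/-- The join of two graphs: all edges between the two vertex sets are added. -/
def joinG {V W : Type*} (G : SimpleGraph V) (H : SimpleGraph W) : SimpleGraph (V ⊕ W) where
  Adj a b := match a, b with
    | Sum.inl a, Sum.inl b => G.Adj a b
    | Sum.inr a, Sum.inr b => H.Adj a b
    | Sum.inl _, Sum.inr _ => True
    | Sum.inr _, Sum.inl _ => True
  symm := by
    constructor
    rintro (a | a) (b | b) h
    · exact G.adj_symm h
    · trivial
    · trivial
    · exact H.adj_symm h
  loopless := by
    constructor
    rintro (a | a) h
    · exact G.irrefl h
    · exact H.irrefl h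

/-- The disjoint union of `t` paths, the `i`-th having `f i` vertices. -/
def pathsUnion (t : ℕ) (f : ℕ → ℕ) : SimpleGraph (Σ i : Fin t, Fin (f i.1)) where
  Adj a b := a.1 = b.1 ∧ ((a.2 : ℕ) + 1 = (b.2 : ℕ) ∨ (b.2 : ℕ) + 1 = (a.2 : ℕ))
  symm := by
    constructor
    rintro ⟨i, a⟩ ⟨j, b⟩ ⟨h₁, h₂⟩
    exact ⟨h₁.symm, h₂.symm⟩
  loopless := by
    constructor
    rintro ⟨i, a⟩ ⟨-, h⟩
    omega

/-- `H` is a minor of `G`: disjoint connected branch sets, one for each vertex of `H`,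
with edges of `G` between branch sets corresponding to edges of `H`. -/
def IsMinor {V W : Type*} (H : SimpleGraph W) (G : SimpleGraph V) : Prop :=
  ∃ B : W → Set V, (∀ w, (B w).Nonempty) ∧ (∀ w, (G.induce (B w)).Connected) ∧
    (∀ w₁ w₂, w₁ ≠ w₂ → Disjoint (B w₁) (B w₂)) ∧
    ∀ w₁ w₂, H.Adj w₁ w₂ → ∃ v₁ ∈ B w₁, ∃ v₂ ∈ B w₂, G.Adj v₁ v₂

/-- Planarity via Wagner's theorem: no `K₅` minor and no `K₃,₃` minor. -/
def IsPlanar {V : Type*} (G : SimpleGraph V) : Prop :=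
  ¬ IsMinor (⊤ : SimpleGraph (Fin 5)) G ∧
  ¬ IsMinor (completeBipartiteGraph (Fin 3) (Fin 3)) G

lemma triCycle {V : Type*} {G : SimpleGraph V} {u x y : V} (h1 : G.Adj u x) (h2 : G.Adj x y)
    (h3 : G.Adj y u) :
    (Walk.cons h1 (Walk.cons h2 (Walk.cons h3 Walk.nil))).IsCycle := by
  have hux := h1.ne; have hxy := h2.ne; have hyu := h3.ne
  refine ⟨⟨⟨?_⟩, by simp⟩, ?_⟩
  · simp [Sym2.eq_iff]; tauto
  · simp [hxy]; tauto

lemma twoTri {V : Type*} {G : SimpleGraph V} {u x y a b : V}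
    (h1 : G.Adj u x) (h2 : G.Adj x y) (h3 : G.Adj y u)
    (h4 : G.Adj u a) (h5 : G.Adj a b) (h6 : G.Adj b u)
    (hxa : x ≠ a) (hxb : x ≠ b) (hya : y ≠ a) (hyb : y ≠ b) :
    ContainsCll G 3 := by
  refine ⟨u, Walk.cons h1 (Walk.cons h2 (Walk.cons h3 Walk.nil)),
    Walk.cons h4 (Walk.cons h5 (Walk.cons h6 Walk.nil)),
    triCycle h1 h2 h3, triCycle h4 h5 h6, rfl, rfl, ?_⟩
  intro v hv1 hv2
  simp [Walk.support] at hv1 hv2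
  rcases hv1 with h | rfl | rfl | h <;> rcases hv2 with h' | h' | h' | h' <;> tauto

theorem stmt2 (n : ℕ) (hn : 7 ≤ n) (G : SimpleGraph (Fin 2 ⊕ Fin (n - 2)))
    [DecidableRel G.Adj]
    (hspan : ∀ (i : Fin 2) (j : Fin (n - 2)), G.Adj (Sum.inl i) (Sum.inr j))
    (hcard : 2 ≤ (Finset.univ.filter fun p : Fin (n - 2) × Fin (n - 2) =>
          p.1 < p.2 ∧ G.Adj (Sum.inr p.1) (Sum.inr p.2)).card
        + (if G.Adj (Sum.inl 0) (Sum.inl 1) then 1 else 0)) :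
    ContainsCll G 3 := by
  have hcardR : 5 ≤ Fintype.card (Fin (n - 2)) := by simp; omega
  have exo : ∀ a b : Fin (n - 2), ∃ r, r ≠ a ∧ r ≠ b := by
    intro a b
    by_contra h
    push_neg at h
    have hsub : (Finset.univ : Finset (Fin (n - 2))) ⊆ {a, b} := by
      intro r _
      have := h r
      simp only [Finset.mem_insert, Finset.mem_singleton]
      tauto
    have h1 := Finset.card_le_card hsub
    have h2 : ({a, b} : Finset (Fin (n - 2))).card ≤ 2 :=
      (Finset.card_insert_le _ _).trans (by simp)
    rw [Finset.card_univ] at h1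
    omega
  by_cases hD : G.Adj (Sum.inl 0) (Sum.inl 1)
  · rw [if_pos hD] at hcard
    have hpos : 0 < (Finset.univ.filter fun p : Fin (n - 2) × Fin (n - 2) =>
        p.1 < p.2 ∧ G.Adj (Sum.inr p.1) (Sum.inr p.2)).card := by omega
    obtain ⟨⟨a, b⟩, hp⟩ := Finset.card_pos.mp hpos
    simp only [Finset.mem_filter] at hp
    obtain ⟨-, -, hab⟩ := hp
    obtain ⟨r, hra, hrb⟩ := exo a b
    exact twoTri hD (hspan 1 r) ((hspan 0 r).symm) (hspan 0 a) hab ((hspan 0 b).symm)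
      (by simp) (by simp) (by simp [hra]) (by simp [hrb])
  · rw [if_neg hD, add_zero] at hcard
    have hpos : 1 < (Finset.univ.filter fun p : Fin (n - 2) × Fin (n - 2) =>
        p.1 < p.2 ∧ G.Adj (Sum.inr p.1) (Sum.inr p.2)).card := by omega
    obtain ⟨⟨a, b⟩, hp, ⟨c, d⟩, hq, hne⟩ := Finset.one_lt_card.mp hpos
    simp only [Finset.mem_filter] at hp hq
    obtain ⟨-, hab, hAB⟩ := hp
    obtain ⟨-, hcd, hCD⟩ := hq
    have h01 : (Sum.inl 0 : Fin 2 ⊕ Fin (n - 2)) ≠ Sum.inl 1 := by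
      simp only [ne_eq, Sum.inl.injEq]; decide
    by_cases hac : a = c
    · subst hac
      have hbd : b ≠ d := fun h => hne (by simp [h])
      exact twoTri hAB ((hspan 0 b).symm) (hspan 0 a) hCD ((hspan 1 d).symm) (hspan 1 a)
        (by simp [hbd]) (by simp) (by simp) h01
    · by_cases had : a = d
      · subst had
        have hbc : b ≠ c := by omega
        exact twoTri hAB ((hspan 0 b).symm) (hspan 0 a) hCD.symm ((hspan 1 c).symm) (hspan 1 a)
          (by simp [hbc]) (by simp) (by simp) h01
      · by_cases hbc : b = c
        · subst hbc
          have had' : a ≠ d := by omega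
          exact twoTri hAB.symm ((hspan 0 a).symm) (hspan 0 b) hCD ((hspan 1 d).symm) (hspan 1 b)
            (by simp [had']) (by simp) (by simp) h01
        · by_cases hbd : b = d
          · subst hbd
            exact twoTri hAB.symm ((hspan 0 a).symm) (hspan 0 b) hCD.symm ((hspan 1 c).symm)
              (hspan 1 b) (by simp [hac]) (by simp) (by simp) h01
          · exact twoTri (hspan 0 a) hAB ((hspan 0 b).symm) (hspan 0 c) hCD ((hspan 0 d).symm)
              (by simp [hac]) (by simp [had]) (by simp [hbc]) (by simp [hbd])
end

section
/- Let G be a planar graph whose vertex set is D ∪ R with D = {u', u''}, |R| = n−2 ≥ 2, every vertex of R adjacent to both u' and u'', and suppose G is C_{l,l}-free for some l ≥ 3 with n ≥ 2(2l−1). Then G[R] is a disjoint union of at least two paths. -/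
open SimpleGraph

namespace CllAux
open SimpleGraph Walk

variable {V : Type*} {G : SimpleGraph V}

def chainWalk (G : SimpleGraph V) (w : ℕ → V) :
    (m : ℕ) → (∀ i, i < m → G.Adj (w i) (w (i+1))) → G.Walk (w 0) (w m)
  | 0, _ => Walk.nil
  | m+1, h => (chainWalk G w m fun i hi => h i (Nat.lt_succ_of_lt hi)).concat
      (h m (Nat.lt_succ_self m))

lemma chainWalk_support (w : ℕ → V) : ∀ (m : ℕ) (h),
    (chainWalk G w m h).support = (List.range (m+1)).map w
  | 0, _ => by simp [chainWalk, List.range_succ]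
  | m+1, h => by
    rw [chainWalk, Walk.support_concat, chainWalk_support w m, List.range_succ (n := m+1)]
    simp

lemma chainWalk_length (w : ℕ → V) : ∀ (m : ℕ) (h), (chainWalk G w m h).length = m
  | 0, _ => rfl
  | m+1, h => by rw [chainWalk, Walk.length_concat, chainWalk_length w m]

lemma reachable_induce_of_walk {S : Set V} {x y : V} (q : G.Walk x y)
    (hS : ∀ z ∈ q.support, z ∈ S) (hx : x ∈ S) (hy : y ∈ S) :
    (G.induce S).Reachable ⟨x, hx⟩ ⟨y, hy⟩ := by
  induction q with
  | nil => rfl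
  | @cons u v z h p ih =>
    have hv : v ∈ S := hS _ (by simp)
    have h1 : (G.induce S).Adj ⟨u, hx⟩ ⟨v, hv⟩ := h
    exact h1.reachable.trans (ih (fun z hz => hS z (by simp [hz])) hv hy)

lemma induce_support_connected [DecidableEq V] {x y : V} (q : G.Walk x y) :
    (G.induce {v | v ∈ q.support}).Connected := by
  rw [connected_iff]
  refine ⟨?_, ⟨⟨x, q.start_mem_support⟩⟩⟩
  rintro ⟨a, ha⟩ ⟨b, hb⟩
  have ra := reachable_induce_of_walk (S := {v | v ∈ q.support}) (q.takeUntil a ha)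
    (fun z hz => q.support_takeUntil_subset ha hz) q.start_mem_support ha
  have rb := reachable_induce_of_walk (S := {v | v ∈ q.support}) (q.takeUntil b hb)
    (fun z hz => q.support_takeUntil_subset hb hz) q.start_mem_support hb
  exact ra.symm.trans rb

lemma induce_singleton_connected (G : SimpleGraph V) (v : V) :
    (G.induce {v}).Connected := by
  rw [connected_iff]
  refine ⟨?_, ⟨⟨v, rfl⟩⟩⟩
  rintro ⟨a, ha⟩ ⟨b, hb⟩
  cases ha; cases hb
  rfl

lemma induce_pair_connected {a b : V} (hab : G.Adj a b) :
    (G.induce {a, b}).Connected := by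
  rw [connected_iff]
  refine ⟨?_, ⟨⟨a, Or.inl rfl⟩⟩⟩
  have hbm : b ∈ ({a, b} : Set V) := Or.inr rfl
  have ham : a ∈ ({a, b} : Set V) := Or.inl rfl
  have key : (G.induce {a, b}).Adj ⟨a, ham⟩ ⟨b, hbm⟩ := hab
  rintro ⟨x, hx⟩ ⟨y, hy⟩
  rcases hx with rfl | hx
  · rcases hy with rfl | hy
    · rfl
    · cases hy; exact key.reachable
  · cases hx
    rcases hy with rfl | hy
    · exact key.symm.reachable
    · cases hy; rfl

lemma getVert_getElem? {x y : V} (p : G.Walk x y) :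
    ∀ i, i ≤ p.length → p.support[i]? = some (p.getVert i) := by
  induction p with
  | nil =>
    intro i hi
    have : i = 0 := by simpa using hi
    subst this; rfl
  | @cons u v z h p ih =>
    intro i hi
    cases i with
    | zero => simp [Walk.support_cons, Walk.getVert_zero]
    | succ i =>
      rw [Walk.support_cons, List.getElem?_cons_succ, Walk.getVert_cons_succ]
      exact ih i (by simpa using hi)

lemma IsPath.getVert_injOn' {x y : V} {p : G.Walk x y} (hp : p.IsPath) {i j : ℕ}
    (hi : i ≤ p.length) (hj : j ≤ p.length) (hij : p.getVert i = p.getVert j) : i = j := by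
  apply (List.getElem?_inj (l := p.support) (by rw [Walk.length_support]; omega)
    (Walk.isPath_def _ |>.mp hp)).mp
  rw [getVert_getElem? p i hi, getVert_getElem? p j hj, hij]

lemma first_crossing {S : Set V} {w a : V} (q : G.Walk w a) (hw : w ∉ S) (ha : a ∈ S) :
    ∃ x y, x ∈ S ∧ y ∉ S ∧ G.Adj y x := by
  induction q with
  | nil => exact absurd ha hw
  | @cons u v z h p ih =>
    by_cases hv : v ∈ S
    · exact ⟨v, u, hv, hw, h⟩
    · exact ih hv ha

lemma exists_three {α : Type*} {S : Set α} (h : 3 ≤ S.ncard) :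
    ∃ a b c, a ∈ S ∧ b ∈ S ∧ c ∈ S ∧ a ≠ b ∧ a ≠ c ∧ b ≠ c := by
  classical
  have hfin : S.Finite := by
    by_contra hinf
    rw [Set.Infinite.ncard hinf] at h; omega
  set s := hfin.toFinset with hs
  have hcard : 3 ≤ s.card := by rwa [Set.ncard_eq_toFinset_card S hfin] at h
  obtain ⟨a, ha⟩ := Finset.card_pos.mp (show 0 < s.card by omega)
  have h2 : 2 ≤ (s.erase a).card := by
    have := Finset.card_erase_of_mem ha; omega
  obtain ⟨b, hb⟩ := Finset.card_pos.mp (show 0 < (s.erase a).card by omega)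
  have h1 : 1 ≤ ((s.erase a).erase b).card := by
    have := Finset.card_erase_of_mem hb; omega
  obtain ⟨c, hc⟩ := Finset.card_pos.mp (show 0 < ((s.erase a).erase b).card by omega)
  have hbS := Finset.mem_of_mem_erase hb
  have hcS := Finset.mem_of_mem_erase (Finset.mem_of_mem_erase hc)
  refine ⟨a, b, c, ?_, ?_, ?_, ?_, ?_, ?_⟩
  · exact hfin.mem_toFinset.mp ha
  · exact hfin.mem_toFinset.mp hbS
  · exact hfin.mem_toFinset.mp hcS
  · intro h; subst h; exact (Finset.mem_erase.mp hb).1 rfl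
  · intro h; subst h; exact (Finset.mem_erase.mp (Finset.mem_of_mem_erase hc)).1 rfl
  · intro h; subst h; exact (Finset.mem_erase.mp hc).1 rfl

lemma mk_cycle {m l : ℕ} (hl : 3 ≤ l) (G : SimpleGraph (Fin 2 ⊕ Fin m))
    (hspan : ∀ (i : Fin 2) (j : Fin m), G.Adj (Sum.inl i) (Sum.inr j))
    (w : ℕ → Fin m)
    (hinj : ∀ i ≤ l-2, ∀ j ≤ l-2, w i = w j → i = j)
    (hadj : ∀ i, i + 1 ≤ l-2 → G.Adj (Sum.inr (w i)) (Sum.inr (w (i+1)))) :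
    ∃ c : G.Walk (Sum.inl 0) (Sum.inl 0), c.IsCycle ∧ c.length = l ∧
      ∀ v, v ∈ c.support ↔ (v = Sum.inl 0 ∨ ∃ i ≤ l-2, v = Sum.inr (w i)) := by
  classical
  set ww : ℕ → (Fin 2 ⊕ Fin m) := fun i => Sum.inr (w i) with hww
  have hch : ∀ i, i < l-2 → G.Adj (ww i) (ww (i+1)) := fun i hi => hadj i (by omega)
  set ch := chainWalk G ww (l-2) hch with hchdef
  have hsup : ch.support = (List.range (l-1)).map ww := by
    rw [hchdef, chainWalk_support]
    congr 2
    omega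
  set p : G.Walk (Sum.inr (w 0)) (Sum.inl 0) := ch.concat ((hspan 0 (w (l-2))).symm) with hpdef
  have hps : p.support = (List.range (l-1)).map ww ++ [Sum.inl 0] := by
    rw [hpdef, Walk.support_concat, hsup]
  have hnodupmap : ((List.range (l-1)).map ww).Nodup := by
    refine List.Nodup.map_on ?_ List.nodup_range
    intro i hi j hj hij
    simp only [List.mem_range] at hi hj
    exact hinj i (by omega) j (by omega) (Sum.inr_injective hij)
  have hpath : p.IsPath := by
    rw [Walk.isPath_def, hps, List.nodup_append]
    refine ⟨hnodupmap, List.nodup_singleton _, ?_⟩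
    intro a ha b hb hab
    simp only [List.mem_singleton] at hb
    subst hb
    subst hab
    simp [hww] at ha
  have hedge : s(Sum.inl 0, Sum.inr (w 0)) ∉ p.edges := by
    intro hmem
    rw [hpdef, Walk.edges_concat] at hmem
    rw [List.concat_eq_append, List.mem_append] at hmem
    rcases hmem with hmem | hmem
    · have := Walk.fst_mem_support_of_mem_edges ch hmem
      rw [hsup] at this
      simp [hww] at this
    · rw [List.mem_singleton] at hmem
      have h2 : w 0 = w (l - 2) := by
        rcases Sym2.eq_iff.mp hmem with ⟨h1, _⟩ | ⟨_, h2⟩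
        · exact absurd h1 (by simp)
        · exact Sum.inr_injective h2
      have h0 := hinj 0 (by omega) (l-2) (by omega) h2
      omega
  refine ⟨Walk.cons (hspan 0 (w 0)) p, ?_, ?_, ?_⟩
  · exact (Walk.cons_isCycle_iff p (hspan 0 (w 0))).mpr ⟨hpath, hedge⟩
  · have hcl : ch.length = l - 2 := chainWalk_length ww (l-2) hch
    rw [Walk.length_cons, hpdef, Walk.length_concat]
    omega
  · intro v
    rw [Walk.support_cons, List.mem_cons, hps, List.mem_append]
    constructor
    · rintro (rfl | h | h)
      · exact Or.inl rfl
      · rcases List.mem_map.mp h with ⟨i, hi, rfl⟩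
        exact Or.inr ⟨i, by simp only [List.mem_range] at hi; omega, rfl⟩
      · simp only [List.mem_singleton] at h; exact Or.inl h
    · rintro (rfl | ⟨i, hi, rfl⟩)
      · exact Or.inl rfl
      · refine Or.inr (Or.inl (List.mem_map.mpr ⟨i, List.mem_range.mpr (by omega), rfl⟩))

lemma mk_cll {m l : ℕ} (hl : 3 ≤ l) (G : SimpleGraph (Fin 2 ⊕ Fin m))
    (hspan : ∀ (i : Fin 2) (j : Fin m), G.Adj (Sum.inl i) (Sum.inr j))
    (w : ℕ → Fin m)
    (hinj : ∀ i ≤ 2*l-3, ∀ j ≤ 2*l-3, w i = w j → i = j)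
    (hadj : ∀ i, i + 1 ≤ 2*l-3 → G.Adj (Sum.inr (w i)) (Sum.inr (w (i+1)))) :
    ContainsCll G l := by
  obtain ⟨c₁, hc₁, hl₁, hs₁⟩ := mk_cycle hl G hspan w
    (fun i hi j hj h => hinj i (by omega) j (by omega) h)
    (fun i hi => hadj i (by omega))
  obtain ⟨c₂, hc₂, hl₂, hs₂⟩ := mk_cycle hl G hspan (fun i => w (l-1+i))
    (fun i hi j hj h => by
      have := hinj (l-1+i) (by omega) (l-1+j) (by omega) h
      omega)
    (fun i hi => by
      have h := hadj (l-1+i) (by omega)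
      have e : l-1+(i+1) = (l-1+i)+1 := by omega
      show G.Adj (Sum.inr (w (l-1+i))) (Sum.inr (w (l-1+(i+1))))
      rw [e]; exact h)
  refine ⟨Sum.inl 0, c₁, c₂, hc₁, hc₂, hl₁, hl₂, ?_⟩
  intro v h1 h2
  rcases (hs₁ v).mp h1 with rfl | ⟨i, hi, rfl⟩
  · rfl
  rcases (hs₂ _).mp h2 with h | ⟨j, hj, heq⟩
  · exact h
  · have := hinj i (by omega) (l-1+j) (by omega) (Sum.inr_injective heq)
    omega

lemma cll_of_path {m l : ℕ} (hl : 3 ≤ l) (G : SimpleGraph (Fin 2 ⊕ Fin m))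
    (hspan : ∀ (i : Fin 2) (j : Fin m), G.Adj (Sum.inl i) (Sum.inr j))
    {a b : Fin m} (p : (G.comap Sum.inr).Walk a b) (hp : p.IsPath)
    (hlen : 2*l-3 ≤ p.length) : ContainsCll G l :=
  mk_cll hl G hspan p.getVert
    (fun i hi j hj hij => IsPath.getVert_injOn' hp (le_trans hi hlen) (le_trans hj hlen) hij)
    (fun i hi => p.adj_getVert_succ (by omega))


lemma k33_of_deg3 {m : ℕ} (G : SimpleGraph (Fin 2 ⊕ Fin m))
    (hspan : ∀ (i : Fin 2) (j : Fin m), G.Adj (Sum.inl i) (Sum.inr j))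
    {v w1 w2 w3 : Fin m}
    (h1 : G.Adj (Sum.inr v) (Sum.inr w1)) (h2 : G.Adj (Sum.inr v) (Sum.inr w2))
    (h3 : G.Adj (Sum.inr v) (Sum.inr w3))
    (h12 : w1 ≠ w2) (h13 : w1 ≠ w3) (h23 : w2 ≠ w3) :
    IsMinor (completeBipartiteGraph (Fin 3) (Fin 3)) G := by
  have hv1 : v ≠ w1 := fun h => (G.ne_of_adj h1) (congrArg _ h)
  have hv2 : v ≠ w2 := fun h => (G.ne_of_adj h2) (congrArg _ h)
  have hv3 : v ≠ w3 := fun h => (G.ne_of_adj h3) (congrArg _ h)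
  have hv1' : w1 ≠ v := Ne.symm hv1
  have hv2' : w2 ≠ v := Ne.symm hv2
  have hv3' : w3 ≠ v := Ne.symm hv3
  have h21 : w2 ≠ w1 := Ne.symm h12
  have h31 : w3 ≠ w1 := Ne.symm h13
  have h32 : w3 ≠ w2 := Ne.symm h23
  refine ⟨Sum.elim
      (fun i => match i with
        | 0 => ({Sum.inl 0} : Set (Fin 2 ⊕ Fin m)) | 1 => {Sum.inl 1} | 2 => {Sum.inr v})
      (fun j => match j with
        | 0 => ({Sum.inr w1} : Set (Fin 2 ⊕ Fin m)) | 1 => {Sum.inr w2} | 2 => {Sum.inr w3}),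
      ?_, ?_, ?_, ?_⟩
  · rintro (i | j)
    · fin_cases i <;> exact Set.singleton_nonempty _
    · fin_cases j <;> exact Set.singleton_nonempty _
  · rintro (i | j)
    · fin_cases i <;> exact induce_singleton_connected G _
    · fin_cases j <;> exact induce_singleton_connected G _
  · rintro (i | j) (i' | j') hne <;>
      [ fin_cases i <;> fin_cases i'; fin_cases i <;> fin_cases j';
        fin_cases j <;> fin_cases i'; fin_cases j <;> fin_cases j' ] <;>
      simp_all [Set.disjoint_singleton]
  · rintro (i | j) (i' | j') hadj
    · simp [completeBipartiteGraph] at hadj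
    · fin_cases i <;> fin_cases j' <;>
        first
          | exact ⟨_, rfl, _, rfl, hspan 0 _⟩
          | exact ⟨_, rfl, _, rfl, hspan 1 _⟩
          | exact ⟨_, rfl, _, rfl, h1⟩
          | exact ⟨_, rfl, _, rfl, h2⟩
          | exact ⟨_, rfl, _, rfl, h3⟩
    · fin_cases j <;> fin_cases i' <;>
        first
          | exact ⟨_, rfl, _, rfl, (hspan 0 _).symm⟩
          | exact ⟨_, rfl, _, rfl, (hspan 1 _).symm⟩
          | exact ⟨_, rfl, _, rfl, h1.symm⟩
          | exact ⟨_, rfl, _, rfl, h2.symm⟩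
          | exact ⟨_, rfl, _, rfl, h3.symm⟩
    · simp [completeBipartiteGraph] at hadj

lemma k5_of_cycle {m : ℕ} (G : SimpleGraph (Fin 2 ⊕ Fin m))
    (hspan : ∀ (i : Fin 2) (j : Fin m), G.Adj (Sum.inl i) (Sum.inr j))
    {v0 : Fin m} (c : (G.comap Sum.inr).Walk v0 v0) (hc : c.IsCycle)
    {r : Fin m} (hr : r ∉ c.support) :
    IsMinor (⊤ : SimpleGraph (Fin 5)) G := by
  classical
  have h3 : 3 ≤ c.length := hc.three_le_length
  have hnil : ¬c.Nil := by rw [Walk.not_nil_iff_lt_length]; omega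
  obtain ⟨v1, h01, q, rfl⟩ := Walk.not_nil_iff.mp hnil
  rw [Walk.cons_isCycle_iff] at hc
  obtain ⟨hq, -⟩ := hc
  have hv1v0 : v1 ≠ v0 := h01.ne'
  obtain ⟨v2, h12, q2, rfl⟩ := Walk.exists_eq_cons_of_ne hv1v0 q
  have hq2 : q2.IsPath := hq.of_cons
  have hv1q2 : v1 ∉ q2.support := ((Walk.cons_isPath_iff _ _).mp hq).2
  have hlenq2 : 1 ≤ q2.length := by
    simp only [Walk.length_cons] at h3; omega
  have hv2v0 : v2 ≠ v0 := by
    intro h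
    subst h
    rw [Walk.isPath_iff_eq_nil] at hq2
    rw [hq2] at hlenq2
    simp at hlenq2
  obtain ⟨w3, h03, q3, hq3eq⟩ := Walk.exists_eq_cons_of_ne (Ne.symm hv2v0) q2.reverse
  have hq2r : q2.reverse.IsPath := hq2.reverse
  rw [hq3eq] at hq2r
  have hq3 : q3.IsPath := hq2r.of_cons
  have hv0q3 : v0 ∉ q3.support := ((Walk.cons_isPath_iff _ _).mp hq2r).2
  have hq3sub : ∀ z, z ∈ q3.support → z ∈ q2.support := by
    intro z hz
    have hz2 : z ∈ q2.reverse.support := by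
      rw [hq3eq, Walk.support_cons]; exact List.mem_cons_of_mem _ hz
    rwa [Walk.support_reverse, List.mem_reverse] at hz2
  have hv1q3 : v1 ∉ q3.support := fun h => hv1q2 (hq3sub _ h)
  have hrq2 : r ∉ q2.support := by
    intro h
    exact hr (by rw [Walk.support_cons, Walk.support_cons]
                 exact List.mem_cons_of_mem _ (List.mem_cons_of_mem _ h))
  have hrq3 : r ∉ q3.support := fun h => hrq2 (hq3sub _ h)
  have hrv0 : r ≠ v0 := by
    intro h
    apply hr
    rw [h]
    exact Walk.start_mem_support _
  have hrv1 : r ≠ v1 := by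
    intro h
    apply hr
    rw [Walk.support_cons]
    refine List.mem_cons_of_mem _ ?_
    rw [h]
    exact Walk.start_mem_support _
  let f : (G.comap Sum.inr) →g G := ⟨Sum.inr, fun h => h⟩
  let gq3 := q3.map f
  have hgq3sup : ∀ z, z ∈ gq3.support ↔ ∃ y ∈ q3.support, Sum.inr y = z := by
    intro z
    rw [Walk.support_map]
    constructor
    · intro h
      rcases List.mem_map.mp h with ⟨y, hy, hz⟩
      exact ⟨y, hy, hz⟩
    · rintro ⟨y, hy, hz⟩
      exact List.mem_map.mpr ⟨y, hy, hz⟩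
  refine ⟨(fun i : Fin 5 => match i with
    | 0 => ({Sum.inl 1} : Set (Fin 2 ⊕ Fin m))
    | 1 => {Sum.inl 0, Sum.inr r}
    | 2 => {Sum.inr v0}
    | 3 => {Sum.inr v1}
    | 4 => {z | z ∈ gq3.support}), ?_, ?_, ?_, ?_⟩
  · intro i
    fin_cases i
    · exact Set.singleton_nonempty _
    · exact ⟨Sum.inl 0, Or.inl rfl⟩
    · exact Set.singleton_nonempty _
    · exact Set.singleton_nonempty _
    · exact ⟨_, gq3.start_mem_support⟩
  · intro i
    fin_cases i
    · exact induce_singleton_connected G _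
    · exact induce_pair_connected (hspan 0 r)
    · exact induce_singleton_connected G _
    · exact induce_singleton_connected G _
    · exact induce_support_connected gq3
  · intro i i' hne
    fin_cases i <;> fin_cases i' <;>
      simp_all [Set.disjoint_left, hgq3sup, hv1v0.symm, hrv0.symm, hrv1.symm] <;>
      (intro b hb hbe; subst hbe; simp_all)
  · intro i i' hadj
    fin_cases i <;> fin_cases i' <;>
      first
        | exact absurd rfl hadj
        | exact ⟨_, rfl, _, Or.inr rfl, hspan 1 r⟩
        | exact ⟨_, Or.inr rfl, _, rfl, (hspan 1 r).symm⟩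
        | exact ⟨_, rfl, _, rfl, hspan 1 v0⟩
        | exact ⟨_, rfl, _, rfl, (hspan 1 v0).symm⟩
        | exact ⟨_, rfl, _, rfl, hspan 1 v1⟩
        | exact ⟨_, rfl, _, rfl, (hspan 1 v1).symm⟩
        | exact ⟨_, rfl, _, gq3.start_mem_support, hspan 1 w3⟩
        | exact ⟨_, gq3.start_mem_support, _, rfl, (hspan 1 w3).symm⟩
        | exact ⟨_, Or.inl rfl, _, rfl, hspan 0 v0⟩
        | exact ⟨_, rfl, _, Or.inl rfl, (hspan 0 v0).symm⟩
        | exact ⟨_, Or.inl rfl, _, rfl, hspan 0 v1⟩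
        | exact ⟨_, rfl, _, Or.inl rfl, (hspan 0 v1).symm⟩
        | exact ⟨_, Or.inl rfl, _, gq3.start_mem_support, hspan 0 w3⟩
        | exact ⟨_, gq3.start_mem_support, _, Or.inl rfl, (hspan 0 w3).symm⟩
        | exact ⟨_, rfl, _, rfl, h01⟩
        | exact ⟨_, rfl, _, rfl, h01.symm⟩
        | exact ⟨_, rfl, _, gq3.start_mem_support, h03⟩
        | exact ⟨_, gq3.start_mem_support, _, rfl, h03.symm⟩
        | exact ⟨_, rfl, _, gq3.end_mem_support, h12⟩
        | exact ⟨_, gq3.end_mem_support, _, rfl, h12.symm⟩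

end CllAux

theorem stmt5 (n l : ℕ) (hl : 3 ≤ l) (hn : 2 * (2 * l - 1) ≤ n) (hn2 : 2 ≤ n - 2)
    (G : SimpleGraph (Fin 2 ⊕ Fin (n - 2))) (hpl : IsPlanar G)
    (hspan : ∀ (i : Fin 2) (j : Fin (n - 2)), G.Adj (Sum.inl i) (Sum.inr j))
    (hfree : ¬ ContainsCll G l) :
    (G.induce (Set.range Sum.inr)).IsAcyclic ∧
    (∀ v : Fin (n - 2), {w : Fin (n - 2) | G.Adj (Sum.inr v) (Sum.inr w)}.ncard ≤ 2) ∧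
    ¬ (G.induce (Set.range Sum.inr)).Connected := by
  classical
  set H := G.comap (Sum.inr : Fin (n-2) → Fin 2 ⊕ Fin (n-2)) with hH
  have hinj : Function.Injective (Sum.inr : Fin (n-2) → Fin 2 ⊕ Fin (n-2)) :=
    Sum.inr_injective
  let e : H ≃g (G.induce (Set.range (Sum.inr : Fin (n-2) → Fin 2 ⊕ Fin (n-2)))) :=
    { toEquiv := Equiv.ofInjective _ hinj
      map_rel_iff' := Iff.rfl }
  have P2 : ∀ v : Fin (n-2), {w : Fin (n-2) | G.Adj (Sum.inr v) (Sum.inr w)}.ncard ≤ 2 := by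
    intro v
    by_contra hcon
    push_neg at hcon
    obtain ⟨w1, w2, w3, hw1, hw2, hw3, h12, h13, h23⟩ :=
      CllAux.exists_three (S := {w : Fin (n-2) | G.Adj (Sum.inr v) (Sum.inr w)}) (by omega)
    exact hpl.2 (CllAux.k33_of_deg3 G hspan hw1 hw2 hw3 h12 h13 h23)
  have P1 : H.IsAcyclic := by
    intro v0 c hc
    by_cases hk : 2*l - 2 ≤ c.length
    · have hnil : ¬c.Nil := by
        rw [Walk.not_nil_iff_lt_length]
        have := hc.three_le_length
        omega
      obtain ⟨v1, h01, q, rfl⟩ := Walk.not_nil_iff.mp hnil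
      rw [Walk.cons_isCycle_iff] at hc
      apply hfree
      refine CllAux.cll_of_path hl G hspan q hc.1 ?_
      simp only [Walk.length_cons] at hk
      omega
    · have h3 := hc.three_le_length
      have hex : ∃ r : Fin (n-2), r ∉ c.support := by
        by_contra hall
        push_neg at hall
        have h1 : (Finset.univ : Finset (Fin (n-2))).card ≤ c.support.toFinset.card :=
          Finset.card_le_card (fun x _ => List.mem_toFinset.mpr (hall x))
        have h2 : c.support.toFinset.card ≤ c.support.length := c.support.toFinset_card_le
        rw [Walk.length_support] at h2
        simp only [Finset.card_univ, Fintype.card_fin] at h1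
        omega
      obtain ⟨r, hrr⟩ := hex
      exact hpl.1 (CllAux.k5_of_cycle G hspan c hc hrr)
  refine ⟨?_, P2, ?_⟩
  · intro x c hc
    exact P1 _ ((Walk.map_isCycle_iff_of_injective
      (f := e.symm.toHom) e.symm.toEquiv.injective).mpr hc)
  · intro hconn
    have hHconn : H.Connected := hconn.map e.symm.toHom e.symm.toEquiv.surjective
    have key : ∀ mm : ℕ, mm + 1 ≤ n - 2 →
        ∃ (a b : Fin (n-2)) (p : H.Walk a b), p.IsPath ∧ p.length = mm := by
      intro mm
      induction mm with
      | zero =>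
        intro _
        have hv : (0:ℕ) < n - 2 := by omega
        exact ⟨⟨0, hv⟩, ⟨0, hv⟩, Walk.nil, Walk.IsPath.nil, rfl⟩
      | succ mm ih =>
        intro hmm
        obtain ⟨a, b, p, hp, hplen⟩ := ih (by omega)
        have hex : ∃ y : Fin (n-2), y ∉ p.support := by
          by_contra hall
          push_neg at hall
          have h1 : (Finset.univ : Finset (Fin (n-2))).card ≤ p.support.toFinset.card :=
            Finset.card_le_card (fun x _ => List.mem_toFinset.mpr (hall x))
          have h2 : p.support.toFinset.card ≤ p.support.length := p.support.toFinset_card_le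
          rw [Walk.length_support] at h2
          simp only [Finset.card_univ, Fintype.card_fin] at h1
          omega
        obtain ⟨ww, hww⟩ := hex
        obtain ⟨q⟩ := hHconn.preconnected ww a
        obtain ⟨x, y, hxS, hyS, hadjyx⟩ :=
          CllAux.first_crossing (S := {z | z ∈ p.support}) q hww p.start_mem_support
        by_cases hxa : x = a
        · subst hxa
          exact ⟨y, b, Walk.cons hadjyx p, hp.cons hyS, by simp [hplen]⟩
        by_cases hxb : x = b
        · subst hxb
          refine ⟨y, a, Walk.cons hadjyx p.reverse, hp.reverse.cons ?_, by simp [hplen]⟩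
          rw [Walk.support_reverse, List.mem_reverse]
          exact hyS
        · exfalso
          have hxS' : x ∈ p.support := hxS
          have ht : (p.takeUntil x hxS').IsPath := hp.takeUntil hxS'
          have hd : (p.dropUntil x hxS').IsPath := hp.dropUntil hxS'
          obtain ⟨prev, hxprev, t2, ht2eq⟩ :=
            Walk.exists_eq_cons_of_ne hxa (p.takeUntil x hxS').reverse
          obtain ⟨succ, hxsucc, d2, hd2eq⟩ :=
            Walk.exists_eq_cons_of_ne hxb (p.dropUntil x hxS')
          have hprevmem : prev ∈ (p.takeUntil x hxS').support := by
            have hpm : prev ∈ (p.takeUntil x hxS').reverse.support := by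
              rw [ht2eq, Walk.support_cons]
              exact List.mem_cons_of_mem _ (Walk.start_mem_support _)
            rwa [Walk.support_reverse, List.mem_reverse] at hpm
          have hsuccmem : succ ∈ d2.support := Walk.start_mem_support _
          have hsupp : p.support =
              (p.takeUntil x hxS').support ++ (p.dropUntil x hxS').support.tail := by
            conv_lhs => rw [← Walk.take_spec p hxS']
            exact Walk.support_append _ _
          have hnodup : ((p.takeUntil x hxS').support ++
              (p.dropUntil x hxS').support.tail).Nodup := by
            rw [← hsupp]
            exact hp.support_nodup
          have hdisj := List.disjoint_of_nodup_append hnodup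
          have hdtail : (p.dropUntil x hxS').support.tail = d2.support := by
            rw [hd2eq, Walk.support_cons, List.tail_cons]
          have hps : prev ≠ succ := by
            intro h
            rw [h] at hprevmem
            exact hdisj hprevmem (hdtail ▸ hsuccmem)
          have hyprev : y ≠ prev := by
            intro h
            rw [h] at hyS
            exact hyS (by rw [hsupp]; exact List.mem_append_left _ hprevmem)
          have hysucc : y ≠ succ := by
            intro h
            rw [h] at hyS
            refine hyS ?_
            rw [hsupp]
            exact List.mem_append_right _ (hdtail ▸ hsuccmem)
          have hsub : ({prev, succ, y} : Set (Fin (n-2))) ⊆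
              {w | G.Adj (Sum.inr x) (Sum.inr w)} := by
            rintro z (rfl | rfl | rfl)
            · exact hxprev
            · exact hxsucc
            · exact hadjyx.symm
          have hcard3 : ({prev, succ, y} : Set (Fin (n-2))).ncard = 3 := by
            rw [Set.ncard_insert_of_notMem (by simp only [Set.mem_insert_iff, Set.mem_singleton_iff]; rintro (h|h); exact hps h; exact hyprev h.symm),
              Set.ncard_insert_of_notMem (by simp only [Set.mem_singleton_iff]; intro h; exact hysucc h.symm), Set.ncard_singleton]
          have hle := Set.ncard_le_ncard hsub (Set.toFinite _)
          have := P2 x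
          omega
    obtain ⟨a, b, p, hp, hplen⟩ := key (2*l-3) (by omega)
    exact hfree (CllAux.cll_of_path hl G hspan p hp (by omega))
end

section
/- Let l ≥ 4 and let H be a disjoint union of vertex-disjoint paths with i-th longest path of order n_i(H). The join K_2 + H is C_{l,l}-free if and only if (n_1(H)+n_2(H) ≤ 2l−4 and n_1(H) ≤ l−2) or (n_1(H)+n_2(H) ≤ 2l−4 and n_2(H)+n_3(H) ≤ l−3). -/
open SimpleGraph

section helpers
variable {V : Type*} {G : SimpleGraph V}

lemma support_eq_map_getVert {u v : V} (p : G.Walk u v) :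
    p.support = (List.range (p.length + 1)).map p.getVert := by
  induction p with
  | nil => simp [Walk.getVert]
  | @cons a b c h q ih =>
    rw [Walk.support_cons, Walk.length_cons, List.range_succ_eq_map, List.map_cons,
      List.map_map]
    simp only [Function.comp_def, Walk.getVert_cons_succ]
    rw [ih]
    rfl

lemma getVert_injOn_of_isCycle {v : V} {c : G.Walk v v} (hc : c.IsCycle) :
    ∀ k < c.length, ∀ m < c.length, c.getVert k = c.getVert m → k = m := by
  have hs := support_eq_map_getVert c
  have hnd := hc.support_nodup  -- (c.support).tail.Nodup
  rw [hs, List.range_succ_eq_map, List.map_cons, List.tail_cons, List.map_map] at hnd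
  have hinj : ∀ k < c.length, ∀ m < c.length, c.getVert (k+1) = c.getVert (m+1) → k = m := by
    intro k hk m hm he
    exact List.inj_on_of_nodup_map hnd (List.mem_range.2 hk) (List.mem_range.2 hm) he
  intro k hk m hm he
  have h0 : c.getVert 0 = v := Walk.getVert_zero c
  have hL : c.getVert c.length = v := Walk.getVert_length c
  have hlen : 3 ≤ c.length := hc.three_le_length
  rcases Nat.eq_zero_or_pos k with rfl | hk0
  · rcases Nat.eq_zero_or_pos m with rfl | hm0
    · rfl
    · exfalso
      have : c.getVert ((c.length - 1) + 1) = c.getVert ((m-1)+1) := by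
        have h1 : (c.length - 1) + 1 = c.length := by omega
        have h2 : (m-1)+1 = m := by omega
        rw [h1, h2, hL, ← he, h0]
      have := hinj _ (by omega) _ (by omega) this
      omega
  · rcases Nat.eq_zero_or_pos m with rfl | hm0
    · exfalso
      have : c.getVert ((c.length - 1) + 1) = c.getVert ((k-1)+1) := by
        have h1 : (c.length - 1) + 1 = c.length := by omega
        have h2 : (k-1)+1 = k := by omega
        rw [h1, h2, hL, he, h0]
      have := hinj _ (by omega) _ (by omega) this
      omega
    · have : c.getVert ((k-1)+1) = c.getVert ((m-1)+1) := by
        have h2 : (m-1)+1 = m := by omega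
        have h1 : (k-1)+1 = k := by omega
        rw [h1, h2, he]
      have := hinj _ (by omega) _ (by omega) this
      omega

lemma mem_support_rotate_iff {u v x : V} [DecidableEq V] (c : G.Walk v v) (h : u ∈ c.support) :
    x ∈ (c.rotate u h).support ↔ x ∈ c.support := by
  exact Walk.mem_support_rotate_iff c u h

lemma length_rotate {u v : V} [DecidableEq V] (c : G.Walk v v) (h : u ∈ c.support) :
    (c.rotate u h).length = c.length := by
  exact Walk.length_rotate c u h

/-- A walk following a chain of adjacent vertices. -/
def chainWalk (G : SimpleGraph V) (g : ℕ → V) :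
    ∀ n : ℕ, (∀ k < n, G.Adj (g k) (g (k+1))) → G.Walk (g 0) (g n)
  | 0, _ => Walk.nil
  | (n+1), h => (chainWalk G g n (fun k hk => h k (by omega))).concat (h n (by omega))

lemma chainWalk_length (g : ℕ → V) (n : ℕ) (h : ∀ k < n, G.Adj (g k) (g (k+1))) :
    (chainWalk G g n h).length = n := by
  induction n with
  | zero => rfl
  | succ n ih => rw [chainWalk, Walk.length_concat, ih]

lemma chainWalk_support (g : ℕ → V) (n : ℕ) (h : ∀ k < n, G.Adj (g k) (g (k+1))) :
    (chainWalk G g n h).support = (List.range (n+1)).map g := by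
  induction n with
  | zero => rfl
  | succ n ih =>
    rw [chainWalk, Walk.support_concat, ih, List.range_succ (n := n+1), List.map_append]
    simp [List.concat_eq_append]

lemma chainWalk_edges (g : ℕ → V) (n : ℕ) (h : ∀ k < n, G.Adj (g k) (g (k+1))) :
    (chainWalk G g n h).edges = (List.range n).map (fun k => s(g k, g (k+1))) := by
  induction n with
  | zero => rfl
  | succ n ih =>
    rw [chainWalk, Walk.edges_concat, ih, List.range_succ, List.map_append]
    simp [List.concat_eq_append]

/-- Build a cycle from a cyclically-adjacent injective vertex function. -/
lemma cycle_of_fn (g : ℕ → V) (n : ℕ) (hn : 2 ≤ n)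
    (hadj : ∀ k < n, G.Adj (g k) (g (k+1))) (hwrap : G.Adj (g 0) (g n))
    (hinj : ∀ k ≤ n, ∀ m ≤ n, g k = g m → k = m) :
    ∃ c : G.Walk (g 0) (g 0), c.IsCycle ∧ c.length = n + 1 ∧
      (∀ x, x ∈ c.support ↔ ∃ k ≤ n, g k = x) := by
  set p := (chainWalk G g n hadj).reverse with hp
  refine ⟨Walk.cons hwrap p, ?_, ?_, ?_⟩
  · rw [Walk.cons_isCycle_iff]
    constructor
    · rw [hp, Walk.isPath_reverse_iff]
      apply Walk.IsPath.mk'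
      rw [chainWalk_support]
      refine List.Nodup.map_on ?_ List.nodup_range
      intro x hx y hy hxy
      exact hinj x (by simpa using Nat.lt_succ_iff.mp (List.mem_range.1 hx))
        y (by simpa using Nat.lt_succ_iff.mp (List.mem_range.1 hy)) hxy
    · rw [hp, Walk.edges_reverse, List.mem_reverse, chainWalk_edges]
      intro hmem
      obtain ⟨k, hk, he⟩ := List.mem_map.1 hmem
      rw [List.mem_range] at hk
      rw [Sym2.eq_iff] at he
      rcases he with ⟨h1, h2⟩ | ⟨h1, h2⟩
      · have := hinj 0 (by omega) k (by omega) h1.symm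
        have := hinj n le_rfl (k+1) (by omega) h2.symm
        omega
      · have := hinj 0 (by omega) (k+1) (by omega) h2.symm
        have := hinj n le_rfl k (by omega) h1.symm
        omega
  · rw [Walk.length_cons, hp, Walk.length_reverse, chainWalk_length]
  · intro x
    rw [Walk.support_cons, List.mem_cons, hp, Walk.support_reverse, List.mem_reverse,
      chainWalk_support]
    constructor
    · rintro (rfl | hx)
      · exact ⟨0, by omega, rfl⟩
      · obtain ⟨k, hk, rfl⟩ := List.mem_map.1 hx
        exact ⟨k, by simpa using Nat.lt_succ_iff.mp (List.mem_range.1 hk), rfl⟩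
    · rintro ⟨k, hk, rfl⟩
      right
      exact List.mem_map.2 ⟨k, List.mem_range.2 (by omega), rfl⟩

end helpers

abbrev St (t : ℕ) (f : ℕ → ℕ) := Σ i : Fin t, Fin (f i.1)
abbrev GJ (t : ℕ) (f : ℕ → ℕ) : SimpleGraph (Fin 2 ⊕ St t f) :=
  joinG (⊤ : SimpleGraph (Fin 2)) (pathsUnion t f)
section graph2
variable {t : ℕ} {f : ℕ → ℕ}

lemma adj_inl_inr (a : Fin 2) (x : St t f) : (GJ t f).Adj (Sum.inl a) (Sum.inr x) := trivial

lemma adj_inr_inl (a : Fin 2) (x : St t f) : (GJ t f).Adj (Sum.inr x) (Sum.inl a) := trivial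

lemma adj_inl_inl {a b : Fin 2} (h : a ≠ b) : (GJ t f).Adj (Sum.inl a) (Sum.inl b) := h

lemma adj_inr_inr_iff {x y : St t f} :
    (GJ t f).Adj (Sum.inr x) (Sum.inr y) ↔
      (x.1 = y.1 ∧ ((x.2 : ℕ) + 1 = (y.2 : ℕ) ∨ (y.2 : ℕ) + 1 = (x.2 : ℕ))) := Iff.rfl

lemma sigma_ext {x y : St t f} (h1 : x.1 = y.1) (h2 : (x.2 : ℕ) = (y.2 : ℕ)) : x = y := by
  obtain ⟨i, a⟩ := x
  obtain ⟨j, b⟩ := y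
  dsimp at h1 h2
  subst h1
  exact congrArg (Sigma.mk i) (Fin.ext h2)

lemma card_le_capacity (A : Finset (St t f)) (i : Fin t) (h : ∀ x ∈ A, x.1 = i) :
    A.card ≤ f i := by
  classical
  have hsub : A ⊆ Finset.univ.image (fun a : Fin (f i.1) => (⟨i, a⟩ : St t f)) := by
    intro x hx
    obtain ⟨j, a⟩ := x
    have hj := h _ hx
    dsimp at hj
    subst hj
    exact Finset.mem_image.2 ⟨a, Finset.mem_univ _, rfl⟩
  calc A.card ≤ _ := Finset.card_le_card hsub
    _ ≤ Finset.univ.card := Finset.card_image_le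
    _ = f i := by simp

lemma fin2_cases : ∀ (v w w' : Fin 2), w ≠ w' → v = w ∨ v = w' := by decide

lemma chain_comp (g : ℕ → (Fin 2 ⊕ St t f)) (a b : ℕ)
    (hadj : ∀ k, a ≤ k → k < b → (GJ t f).Adj (g k) (g (k+1)))
    (hninl : ∀ k, a ≤ k → k ≤ b → ∀ w : Fin 2, g k ≠ Sum.inl w) :
    ∀ m, a ≤ m → m ≤ b → ∀ x y : St t f, g a = Sum.inr x → g m = Sum.inr y → x.1 = y.1 := by
  intro m ham
  induction m, ham using Nat.le_induction with
  | base =>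
    intro _ x y h1 h2
    rw [h1] at h2
    exact congrArg Sigma.fst (Sum.inr_injective h2)
  | succ m ham ih =>
    intro hmb x y h1 h2
    cases hm : g m with
    | inl v => exact absurd hm (hninl m (by omega) (by omega) v)
    | inr z =>
      have hxz := ih (by omega) x z h1 hm
      have hadj' := hadj m ham (by omega)
      rw [hm, h2] at hadj'
      exact hxz.trans (adj_inr_inr_iff.1 hadj').1

end graph2

section graph3
variable {t : ℕ} {f : ℕ → ℕ}

lemma exists_inl {l : ℕ} (hl : 4 ≤ l) {u : Fin 2 ⊕ St t f} (c : (GJ t f).Walk u u)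
    (hc : c.IsCycle) (hlen : c.length = l) :
    ∃ w : Fin 2, Sum.inl w ∈ c.support := by
  by_contra hno
  push_neg at hno
  set g := c.getVert with hg
  have hmemS : ∀ k, k ≤ l → g k ∈ c.support := fun k hk =>
    Walk.mem_support_iff_exists_getVert.2 ⟨k, rfl, by omega⟩
  have hninl : ∀ k, k ≤ l → ∀ w : Fin 2, g k ≠ Sum.inl w := fun k hk w h =>
    hno w (h ▸ hmemS k hk)
  set d : ℕ → ℕ := fun k => Sum.elim (fun _ => 0) (fun x : St t f => (x.2 : ℕ)) (g k) with hd
  set cp : ℕ → ℕ := fun k => Sum.elim (fun _ => 0) (fun x : St t f => (x.1 : ℕ)) (g k) with hcp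
  have hstep : ∀ k, k < l → cp (k+1) = cp k ∧ (d (k+1) = d k + 1 ∨ d k = d (k+1) + 1) := by
    intro k hk
    have hadj := c.adj_getVert_succ (by omega : k < c.length)
    cases h1 : g k with
    | inl w => exact absurd h1 (hninl k (by omega) w)
    | inr x =>
      cases h2 : g (k+1) with
      | inl w => exact absurd h2 (hninl (k+1) (by omega) w)
      | inr y =>
        rw [← hg, h1, h2] at hadj
        obtain ⟨e1, e2⟩ := adj_inr_inr_iff.1 hadj
        constructor
        · simp only [hcp, h1, h2, Sum.elim_inr]
          exact congrArg Fin.val e1.symm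
        · simp only [hd, h1, h2, Sum.elim_inr]
          omega
  have hval : ∀ k, k ≤ l → ∀ m, m ≤ l → cp k = cp m → d k = d m → g k = g m := by
    intro k hk m hm h1 h2
    cases hk1 : g k with
    | inl w => exact absurd hk1 (hninl k hk w)
    | inr x =>
      cases hm1 : g m with
      | inl w => exact absurd hm1 (hninl m hm w)
      | inr y =>
        rw [hcp] at h1
        rw [hd] at h2
        simp only [hk1, hm1, Sum.elim_inr] at h1 h2
        exact congrArg Sum.inr (sigma_ext (Fin.ext h1) h2)
  have hcpall : ∀ k, k ≤ l → cp k = cp 0 := by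
    intro k
    induction k with
    | zero => intro _; rfl
    | succ n ih => intro h; rw [(hstep n (by omega)).1, ih (by omega)]
  have hgl0 : g l = g 0 := by
    rw [hg]
    rw [show l = c.length from hlen.symm]
    simp
  have hinj := getVert_injOn_of_isCycle hc
  rw [hlen] at hinj
  by_cases hflip : ∃ k, k + 2 ≤ l ∧ d (k+2) = d k
  · obtain ⟨k, hk2, hdk⟩ := hflip
    have hge : g (k+2) = g k :=
      hval _ hk2 _ (by omega) (by rw [hcpall (k+2) hk2, hcpall k (by omega)]) hdk
    rcases eq_or_lt_of_le hk2 with heq | hlt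
    · rw [heq, hgl0] at hge
      have := hinj 0 (by omega) k (by omega) hge
      omega
    · have := hinj (k+2) (by omega) k (by omega) hge
      omega
  · push_neg at hflip
    rcases (hstep 0 (by omega)).2 with h0 | h0
    · have hmono : ∀ k, k < l → d (k+1) = d k + 1 := by
        intro k
        induction k with
        | zero => intro _; exact h0
        | succ n ih =>
          intro h
          rcases (hstep (n+1) (by omega)).2 with h' | h'
          · exact h'
          · exfalso
            have hn := ih (by omega)
            exact hflip n (by omega) (show d (n+1+1) = d n by omega)
      have hlin : ∀ k, k ≤ l → d k = d 0 + k := by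
        intro k
        induction k with
        | zero => intro _; rfl
        | succ n ih =>
          intro h
          have h1 := hmono n (by omega)
          have h2 := ih (by omega)
          omega
      have hll := hlin l (le_refl l)
      have hdl : d l = d 0 := by simp only [hd]; rw [hgl0]
      omega
    · have hmono : ∀ k, k < l → d k = d (k+1) + 1 := by
        intro k
        induction k with
        | zero => intro _; exact h0
        | succ n ih =>
          intro h
          rcases (hstep (n+1) (by omega)).2 with h' | h'
          · exfalso
            have hn := ih (by omega)
            exact hflip n (by omega) (show d (n+1+1) = d n by omega)
          · exact h'
      have hlin : ∀ k, k ≤ l → d k + k = d 0 := by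
        intro k
        induction k with
        | zero => intro _; rfl
        | succ n ih =>
          intro h
          have h1 := hmono n (by omega)
          have h2 := ih (by omega)
          omega
      have hll := hlin l (le_refl l)
      have hdl : d l = d 0 := by simp only [hd]; rw [hgl0]
      omega

end graph3

section graph4
variable {t : ℕ} {f : ℕ → ℕ}

lemma cycle_structure {l : ℕ} (hl : 4 ≤ l) {u : Fin 2 ⊕ St t f} (c : (GJ t f).Walk u u)
    (hc : c.IsCycle) (hlen : c.length = l) :
    (∃ (w : Fin 2) (A : Finset (St t f)),
        (∀ x ∈ A, ∀ y ∈ A, x.1 = y.1) ∧ A.card = l - 1 ∧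
        (∀ x, x ∈ c.support ↔ x = Sum.inl w ∨ ∃ a ∈ A, x = Sum.inr a)) ∨
    (∃ (w w' : Fin 2) (A B : Finset (St t f)), w ≠ w' ∧
        (∀ x ∈ A, ∀ y ∈ A, x.1 = y.1) ∧ (∀ x ∈ B, ∀ y ∈ B, x.1 = y.1) ∧
        Disjoint A B ∧ A.card + B.card = l - 2 ∧
        (∀ x, x ∈ c.support ↔ x = Sum.inl w ∨ x = Sum.inl w' ∨ ∃ a ∈ A ∪ B, x = Sum.inr a)) := by
  classical
  obtain ⟨w, hw⟩ := exists_inl hl c hc hlen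
  set c' := c.rotate _ hw with hc'def
  have hcyc' : c'.IsCycle := hc.rotate hw
  have hlen' : c'.length = l := by rw [hc'def, length_rotate, hlen]
  have hsupp : ∀ x, x ∈ c'.support ↔ x ∈ c.support := fun x => mem_support_rotate_iff c hw
  set g := c'.getVert with hg
  have hg0 : g 0 = Sum.inl w := c'.getVert_zero
  have hgl : g l = Sum.inl w := by rw [hg, ← hlen']; exact c'.getVert_length
  have hadjW : ∀ k, k < l → (GJ t f).Adj (g k) (g (k+1)) := fun k hk =>
    c'.adj_getVert_succ (by omega : k < c'.length)
  have hinj : ∀ k, k < l → ∀ m, m < l → g k = g m → k = m := by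
    have h := getVert_injOn_of_isCycle hcyc'
    rw [hlen'] at h
    exact fun k hk m hm => h k hk m hm
  have hmem : ∀ k, k ≤ l → g k ∈ c.support := fun k hk =>
    (hsupp _).1 (Walk.mem_support_iff_exists_getVert.2 ⟨k, rfl, by omega⟩)
  have hmem' : ∀ x, x ∈ c.support → ∃ k, k ≤ l ∧ g k = x := by
    intro x hx
    obtain ⟨k, h1, h2⟩ := Walk.mem_support_iff_exists_getVert.1 ((hsupp x).2 hx)
    exact ⟨k, by omega, h1⟩
  by_cases htwo : ∃ p, 1 ≤ p ∧ p ≤ l - 1 ∧ ∃ w' : Fin 2, g p = Sum.inl w'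
  · right
    obtain ⟨p, hp1, hp2, w', hgp⟩ := htwo
    have hww' : w ≠ w' := by
      rintro rfl
      have := hinj 0 (by omega) p (by omega) (hg0.trans hgp.symm)
      omega
    have hmid1 : ∀ k, 1 ≤ k → k ≤ p - 1 → ∀ v : Fin 2, g k ≠ Sum.inl v := by
      intro k h1 h2 v hv
      rcases fin2_cases v w w' hww' with rfl | rfl
      · have := hinj k (by omega) 0 (by omega) (hv.trans hg0.symm)
        omega
      · have := hinj k (by omega) p (by omega) (hv.trans hgp.symm)
        omega
    have hmid2 : ∀ k, p + 1 ≤ k → k ≤ l - 1 → ∀ v : Fin 2, g k ≠ Sum.inl v := by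
      intro k h1 h2 v hv
      rcases fin2_cases v w w' hww' with rfl | rfl
      · have := hinj k (by omega) 0 (by omega) (hv.trans hg0.symm)
        omega
      · have := hinj k (by omega) p (by omega) (hv.trans hgp.symm)
        omega
    set A : Finset (St t f) :=
      Finset.univ.filter (fun x => ∃ k, 1 ≤ k ∧ k ≤ p - 1 ∧ g k = Sum.inr x) with hA
    set B : Finset (St t f) :=
      Finset.univ.filter (fun x => ∃ k, p + 1 ≤ k ∧ k ≤ l - 1 ∧ g k = Sum.inr x) with hB
    have hAmem : ∀ x, x ∈ A ↔ ∃ k, 1 ≤ k ∧ k ≤ p - 1 ∧ g k = Sum.inr x := by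
      intro x; rw [hA, Finset.mem_filter]; simp
    have hBmem : ∀ x, x ∈ B ↔ ∃ k, p + 1 ≤ k ∧ k ≤ l - 1 ∧ g k = Sum.inr x := by
      intro x; rw [hB, Finset.mem_filter]; simp
    refine ⟨w, w', A, B, hww', ?_, ?_, ?_, ?_, ?_⟩
    · -- A same comp
      intro x hx y hy
      obtain ⟨k, hk1, hk2, hk3⟩ := (hAmem x).1 hx
      obtain ⟨m, hm1, hm2, hm3⟩ := (hAmem y).1 hy
      rcases le_total k m with hkm | hkm
      · exact chain_comp g k (p-1) (fun j hj1 hj2 => hadjW j (by omega))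
          (fun j hj1 hj2 => hmid1 j (by omega) (by omega)) m hkm (by omega) x y hk3 hm3
      · exact (chain_comp g m (p-1) (fun j hj1 hj2 => hadjW j (by omega))
          (fun j hj1 hj2 => hmid1 j (by omega) (by omega)) k hkm (by omega) y x hm3 hk3).symm
    · -- B same comp
      intro x hx y hy
      obtain ⟨k, hk1, hk2, hk3⟩ := (hBmem x).1 hx
      obtain ⟨m, hm1, hm2, hm3⟩ := (hBmem y).1 hy
      rcases le_total k m with hkm | hkm
      · exact chain_comp g k (l-1) (fun j hj1 hj2 => hadjW j (by omega))
          (fun j hj1 hj2 => hmid2 j (by omega) (by omega)) m hkm (by omega) x y hk3 hm3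
      · exact (chain_comp g m (l-1) (fun j hj1 hj2 => hadjW j (by omega))
          (fun j hj1 hj2 => hmid2 j (by omega) (by omega)) k hkm (by omega) y x hm3 hk3).symm
    · -- disjoint
      rw [Finset.disjoint_left]
      intro x hx hx'
      obtain ⟨k, hk1, hk2, hk3⟩ := (hAmem x).1 hx
      obtain ⟨m, hm1, hm2, hm3⟩ := (hBmem x).1 hx'
      have := hinj k (by omega) m (by omega) (hk3.trans hm3.symm)
      omega
    · -- cards
      have himgA : A.image Sum.inr = (Finset.Icc 1 (p-1)).image g := by
        ext z
        rw [Finset.mem_image, Finset.mem_image]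
        constructor
        · rintro ⟨a, ha, rfl⟩
          obtain ⟨k, hk1, hk2, hk3⟩ := (hAmem a).1 ha
          exact ⟨k, Finset.mem_Icc.2 ⟨hk1, hk2⟩, hk3⟩
        · rintro ⟨k, hk, rfl⟩
          rw [Finset.mem_Icc] at hk
          cases hgk : g k with
          | inl v => exact absurd hgk (hmid1 k hk.1 hk.2 v)
          | inr x => exact ⟨x, (hAmem x).2 ⟨k, hk.1, hk.2, hgk⟩, rfl⟩
      have himgB : B.image Sum.inr = (Finset.Icc (p+1) (l-1)).image g := by
        ext z
        rw [Finset.mem_image, Finset.mem_image]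
        constructor
        · rintro ⟨a, ha, rfl⟩
          obtain ⟨k, hk1, hk2, hk3⟩ := (hBmem a).1 ha
          exact ⟨k, Finset.mem_Icc.2 ⟨hk1, hk2⟩, hk3⟩
        · rintro ⟨k, hk, rfl⟩
          rw [Finset.mem_Icc] at hk
          cases hgk : g k with
          | inl v => exact absurd hgk (hmid2 k hk.1 hk.2 v)
          | inr x => exact ⟨x, (hBmem x).2 ⟨k, hk.1, hk.2, hgk⟩, rfl⟩
      have hcardA : A.card = p - 1 := by
        have h1 : (A.image Sum.inr).card = A.card :=
          Finset.card_image_of_injective A (Sum.inr_injective : Function.Injective (Sum.inr : St t f → Fin 2 ⊕ St t f))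
        have h2 : ((Finset.Icc 1 (p-1)).image g).card = (Finset.Icc 1 (p-1)).card := by
          apply Finset.card_image_of_injOn
          intro a ha b hb hab
          rw [Finset.coe_Icc, Set.mem_Icc] at ha hb
          exact hinj a (by omega) b (by omega) hab
        rw [himgA, h2] at h1
        rw [← h1, Nat.card_Icc]
        omega
      have hcardB : B.card = l - 1 - p := by
        have h1 : (B.image Sum.inr).card = B.card :=
          Finset.card_image_of_injective B (Sum.inr_injective : Function.Injective (Sum.inr : St t f → Fin 2 ⊕ St t f))
        have h2 : ((Finset.Icc (p+1) (l-1)).image g).card = (Finset.Icc (p+1) (l-1)).card := by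
          apply Finset.card_image_of_injOn
          intro a ha b hb hab
          rw [Finset.coe_Icc, Set.mem_Icc] at ha hb
          exact hinj a (by omega) b (by omega) hab
        rw [himgB, h2] at h1
        rw [← h1, Nat.card_Icc]
        omega
      omega
    · -- support characterization
      intro x
      constructor
      · intro hx
        obtain ⟨k, hk, rfl⟩ := hmem' x hx
        rcases Nat.eq_zero_or_pos k with rfl | hk0
        · exact Or.inl hg0
        rcases Nat.eq_or_lt_of_le hk with rfl | hkl
        · exact Or.inl hgl
        rcases eq_or_ne k p with rfl | hkp
        · exact Or.inr (Or.inl hgp)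
        rcases lt_or_gt_of_ne hkp with h | h
        · cases hgk : g k with
          | inl v => exact absurd hgk (hmid1 k (by omega) (by omega) v)
          | inr a =>
            exact Or.inr (Or.inr ⟨a, Finset.mem_union_left _
              ((hAmem a).2 ⟨k, by omega, by omega, hgk⟩), rfl⟩)
        · cases hgk : g k with
          | inl v => exact absurd hgk (hmid2 k (by omega) (by omega) v)
          | inr a =>
            exact Or.inr (Or.inr ⟨a, Finset.mem_union_right _
              ((hBmem a).2 ⟨k, by omega, by omega, hgk⟩), rfl⟩)
      · rintro (rfl | rfl | ⟨a, ha, rfl⟩)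
        · exact hw
        · rw [← hgp]; exact hmem p (by omega)
        · rcases Finset.mem_union.1 ha with ha | ha
          · obtain ⟨k, hk1, hk2, hk3⟩ := (hAmem a).1 ha
            rw [← hk3]; exact hmem k (by omega)
          · obtain ⟨k, hk1, hk2, hk3⟩ := (hBmem a).1 ha
            rw [← hk3]; exact hmem k (by omega)
  · left
    push_neg at htwo
    have hmid : ∀ k, 1 ≤ k → k ≤ l - 1 → ∀ v : Fin 2, g k ≠ Sum.inl v := by
      intro k h1 h2 v hv
      exact htwo k h1 h2 v hv
    set A : Finset (St t f) :=
      Finset.univ.filter (fun x => ∃ k, 1 ≤ k ∧ k ≤ l - 1 ∧ g k = Sum.inr x) with hA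
    have hAmem : ∀ x, x ∈ A ↔ ∃ k, 1 ≤ k ∧ k ≤ l - 1 ∧ g k = Sum.inr x := by
      intro x; rw [hA, Finset.mem_filter]; simp
    refine ⟨w, A, ?_, ?_, ?_⟩
    · intro x hx y hy
      obtain ⟨k, hk1, hk2, hk3⟩ := (hAmem x).1 hx
      obtain ⟨m, hm1, hm2, hm3⟩ := (hAmem y).1 hy
      rcases le_total k m with hkm | hkm
      · exact chain_comp g k (l-1) (fun j hj1 hj2 => hadjW j (by omega))
          (fun j hj1 hj2 => hmid j (by omega) (by omega)) m hkm (by omega) x y hk3 hm3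
      · exact (chain_comp g m (l-1) (fun j hj1 hj2 => hadjW j (by omega))
          (fun j hj1 hj2 => hmid j (by omega) (by omega)) k hkm (by omega) y x hm3 hk3).symm
    · have himgA : A.image Sum.inr = (Finset.Icc 1 (l-1)).image g := by
        ext z
        rw [Finset.mem_image, Finset.mem_image]
        constructor
        · rintro ⟨a, ha, rfl⟩
          obtain ⟨k, hk1, hk2, hk3⟩ := (hAmem a).1 ha
          exact ⟨k, Finset.mem_Icc.2 ⟨hk1, hk2⟩, hk3⟩
        · rintro ⟨k, hk, rfl⟩
          rw [Finset.mem_Icc] at hk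
          cases hgk : g k with
          | inl v => exact absurd hgk (hmid k hk.1 hk.2 v)
          | inr x => exact ⟨x, (hAmem x).2 ⟨k, hk.1, hk.2, hgk⟩, rfl⟩
      have h1 : (A.image Sum.inr).card = A.card :=
        Finset.card_image_of_injective A (Sum.inr_injective : Function.Injective (Sum.inr : St t f → Fin 2 ⊕ St t f))
      have h2 : ((Finset.Icc 1 (l-1)).image g).card = (Finset.Icc 1 (l-1)).card := by
        apply Finset.card_image_of_injOn
        intro a ha b hb hab
        rw [Finset.coe_Icc, Set.mem_Icc] at ha hb
        exact hinj a (by omega) b (by omega) hab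
      rw [himgA, h2] at h1
      rw [← h1, Nat.card_Icc]
      omega
    · intro x
      constructor
      · intro hx
        obtain ⟨k, hk, rfl⟩ := hmem' x hx
        rcases Nat.eq_zero_or_pos k with rfl | hk0
        · exact Or.inl hg0
        rcases Nat.eq_or_lt_of_le hk with rfl | hkl
        · exact Or.inl hgl
        cases hgk : g k with
        | inl v => exact absurd hgk (hmid k (by omega) (by omega) v)
        | inr a => exact Or.inr ⟨a, (hAmem a).2 ⟨k, by omega, by omega, hgk⟩, rfl⟩
      · rintro (rfl | ⟨a, ha, rfl⟩)
        · exact hw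
        · obtain ⟨k, hk1, hk2, hk3⟩ := (hAmem a).1 ha
          rw [← hk3]; exact hmem k (by omega)

end graph4


section counting
variable {t : ℕ} {f : ℕ → ℕ}

lemma fidx01 (hf : Antitone f) {i j : ℕ} (hij : i ≠ j) : f i + f j ≤ f 0 + f 1 := by
  rcases lt_or_gt_of_ne hij with h | h
  · exact Nat.add_le_add (hf (Nat.zero_le i)) (hf (by omega : 1 ≤ j))
  · rw [Nat.add_comm (f i) (f j)]
    exact Nat.add_le_add (hf (Nat.zero_le j)) (hf (by omega : 1 ≤ i))

lemma fidx12 (hf : Antitone f) {i j : ℕ} (hi : 1 ≤ i) (hj : 1 ≤ j) (hij : i ≠ j) :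
    f i + f j ≤ f 1 + f 2 := by
  rcases lt_or_gt_of_ne hij with h | h
  · exact Nat.add_le_add (hf hi) (hf (by omega : 2 ≤ j))
  · rw [Nat.add_comm (f i) (f j)]
    exact Nat.add_le_add (hf hj) (hf (by omega : 2 ≤ i))

lemma onetwo_bound (hf : Antitone f) {l : ℕ} (hl : 4 ≤ l)
    (h1 : f 0 + f 1 ≤ 2*l - 4) (h2' : f 1 + f 2 ≤ l - 3)
    (A A2 B2 : Finset (St t f))
    (hA : ∀ x ∈ A, ∀ y ∈ A, x.1 = y.1) (hA2 : ∀ x ∈ A2, ∀ y ∈ A2, x.1 = y.1)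
    (hB2 : ∀ x ∈ B2, ∀ y ∈ B2, x.1 = y.1)
    (hcA : A.card = l - 1) (hc2 : A2.card + B2.card = l - 2)
    (hdA2 : Disjoint A A2) (hdB2 : Disjoint A B2) (hd3 : Disjoint A2 B2) : False := by
  classical
  obtain ⟨x0, hx0⟩ : A.Nonempty := Finset.card_pos.1 (by omega)
  set i := x0.1 with hi
  have hfi : l - 1 ≤ f i := hcA ▸ card_le_capacity A i (fun y hy => hA y hy x0 hx0)
  have hi0 : (i : ℕ) = 0 := by
    by_contra h
    have : f i ≤ f 1 := hf (by omega)
    omega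
  have hfi0 : f (i : ℕ) = f 0 := by rw [hi0]
  rcases Finset.eq_empty_or_nonempty A2 with rfl | ⟨y0, hy0⟩
  · -- A2 empty, so B2 has card l-2
    rcases Finset.eq_empty_or_nonempty B2 with rfl | ⟨z0, hz0⟩
    · simp at hc2; omega
    set j := z0.1 with hj
    have hfj : l - 2 ≤ f j := by
      have := card_le_capacity B2 j (fun y hy => hB2 y hy z0 hz0)
      simp at hc2
      omega
    rcases Nat.eq_zero_or_pos (j : ℕ) with hj0 | hj1
    · -- same comp as A
      have hij : i = j := Fin.ext (by omega)
      have hcap := card_le_capacity (A ∪ B2) i (by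
        intro x hx
        rcases Finset.mem_union.1 hx with hx | hx
        · exact hA x hx x0 hx0
        · rw [hij]; exact hB2 x hx z0 hz0)
      rw [Finset.card_union_of_disjoint hdB2] at hcap
      simp at hc2
      omega
    · have : f j ≤ f 1 := hf (by omega)
      omega
  · set j1 := y0.1 with hj1
    have hfj1 : A2.card ≤ f j1 := card_le_capacity A2 j1 (fun y hy => hA2 y hy y0 hy0)
    rcases Finset.eq_empty_or_nonempty B2 with rfl | ⟨z0, hz0⟩
    · -- B2 empty, A2 has card l-2
      have hc2' : A2.card = l - 2 := by simpa using hc2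
      rcases Nat.eq_zero_or_pos (j1 : ℕ) with hj0 | hj1'
      · have hij : i = j1 := Fin.ext (by omega)
        have hcap := card_le_capacity (A ∪ A2) i (by
          intro x hx
          rcases Finset.mem_union.1 hx with hx | hx
          · exact hA x hx x0 hx0
          · rw [hij]; exact hA2 x hx y0 hy0)
        rw [Finset.card_union_of_disjoint hdA2] at hcap
        omega
      · have : f j1 ≤ f 1 := hf (by omega)
        omega
    · set j2 := z0.1 with hj2
      have hfj2 : B2.card ≤ f j2 := card_le_capacity B2 j2 (fun y hy => hB2 y hy z0 hz0)
      rcases Nat.eq_zero_or_pos (j1 : ℕ) with hj10 | hj11 <;>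
        rcases Nat.eq_zero_or_pos (j2 : ℕ) with hj20 | hj21
      · -- both comp 0
        have hij1 : i = j1 := Fin.ext (by omega)
        have hij2 : i = j2 := Fin.ext (by omega)
        have hcap := card_le_capacity (A ∪ A2 ∪ B2) i (by
          intro x hx
          rcases Finset.mem_union.1 hx with hx | hx
          · rcases Finset.mem_union.1 hx with hx | hx
            · exact hA x hx x0 hx0
            · rw [hij1]; exact hA2 x hx y0 hy0
          · rw [hij2]; exact hB2 x hx z0 hz0)
        rw [Finset.card_union_of_disjoint (by
          rw [Finset.disjoint_union_left]; exact ⟨hdB2, hd3⟩),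
          Finset.card_union_of_disjoint hdA2] at hcap
        omega
      · -- j1 = 0, j2 ≥ 1
        have hij1 : i = j1 := Fin.ext (by omega)
        have hcap := card_le_capacity (A ∪ A2) i (by
          intro x hx
          rcases Finset.mem_union.1 hx with hx | hx
          · exact hA x hx x0 hx0
          · rw [hij1]; exact hA2 x hx y0 hy0)
        rw [Finset.card_union_of_disjoint hdA2] at hcap
        have : f j2 ≤ f 1 := hf (by omega)
        omega
      · -- j2 = 0, j1 ≥ 1
        have hij2 : i = j2 := Fin.ext (by omega)
        have hcap := card_le_capacity (A ∪ B2) i (by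
          intro x hx
          rcases Finset.mem_union.1 hx with hx | hx
          · exact hA x hx x0 hx0
          · rw [hij2]; exact hB2 x hx z0 hz0)
        rw [Finset.card_union_of_disjoint hdB2] at hcap
        have : f j1 ≤ f 1 := hf (by omega)
        omega
      · -- both ≥ 1
        rcases eq_or_ne j1 j2 with hje | hjne
        · have hcap := card_le_capacity (A2 ∪ B2) j1 (by
            intro x hx
            rcases Finset.mem_union.1 hx with hx | hx
            · exact hA2 x hx y0 hy0
            · rw [hje]; exact hB2 x hx z0 hz0)
          rw [Finset.card_union_of_disjoint hd3] at hcap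
          have : f j1 ≤ f 1 := hf (by omega)
          omega
        · have := fidx12 hf hj11 hj21 (fun h => hjne (Fin.ext h))
          omega

lemma oneone_inl_bound (hf : Antitone f) {l : ℕ} (hl : 4 ≤ l)
    (h1 : f 0 + f 1 ≤ 2*l - 4)
    (A1 A2 : Finset (St t f))
    (hA1 : ∀ x ∈ A1, ∀ y ∈ A1, x.1 = y.1) (hA2 : ∀ x ∈ A2, ∀ y ∈ A2, x.1 = y.1)
    (hc1 : A1.card = l - 1) (hc2 : A2.card = l - 1)
    (hd : Disjoint A1 A2) : False := by
  classical
  obtain ⟨x0, hx0⟩ : A1.Nonempty := Finset.card_pos.1 (by omega)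
  obtain ⟨y0, hy0⟩ : A2.Nonempty := Finset.card_pos.1 (by omega)
  have hf1 : l - 1 ≤ f x0.1 := hc1 ▸ card_le_capacity A1 x0.1 (fun y hy => hA1 y hy x0 hx0)
  have hf2 : l - 1 ≤ f y0.1 := hc2 ▸ card_le_capacity A2 y0.1 (fun y hy => hA2 y hy y0 hy0)
  rcases eq_or_ne x0.1 y0.1 with hje | hjne
  · have hcap := card_le_capacity (A1 ∪ A2) x0.1 (by
      intro x hx
      rcases Finset.mem_union.1 hx with hx | hx
      · exact hA1 x hx x0 hx0
      · rw [hje]; exact hA2 x hx y0 hy0)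
    rw [Finset.card_union_of_disjoint hd] at hcap
    have : f x0.1 ≤ f 0 := hf (Nat.zero_le _)
    omega
  · have := fidx01 hf (fun h => hjne (Fin.ext h))
    have h0 : f x0.1 ≤ f 0 ∨ f x0.1 ≤ f 1 := by
      rcases Nat.eq_zero_or_pos (x0.1 : ℕ) with h | h
      · exact Or.inl (hf (by omega))
      · exact Or.inr (hf (by omega))
    omega

lemma oneone_inr_bound (hf : Antitone f) {l : ℕ} (hl : 4 ≤ l)
    (h1 : f 0 + f 1 ≤ 2*l - 4)
    (A1 A2 : Finset (St t f)) (x0 : St t f)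
    (hA1 : ∀ x ∈ A1, ∀ y ∈ A1, x.1 = y.1) (hA2 : ∀ x ∈ A2, ∀ y ∈ A2, x.1 = y.1)
    (hc1 : A1.card = l - 1) (hc2 : A2.card = l - 1)
    (hx01 : x0 ∈ A1) (hx02 : x0 ∈ A2) (hint : A1 ∩ A2 ⊆ {x0}) : False := by
  classical
  have hcap := card_le_capacity (A1 ∪ A2) x0.1 (by
    intro x hx
    rcases Finset.mem_union.1 hx with hx | hx
    · exact hA1 x hx x0 hx01
    · exact hA2 x hx x0 hx02)
  have hinter : A1 ∩ A2 = {x0} := by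
    apply Finset.Subset.antisymm hint
    intro x hx
    rw [Finset.mem_singleton] at hx
    subst hx
    exact Finset.mem_inter.2 ⟨hx01, hx02⟩
  have hcards := Finset.card_union_add_card_inter A1 A2
  rw [hinter, Finset.card_singleton] at hcards
  have : f x0.1 ≤ f 0 := hf (Nat.zero_le _)
  omega

lemma no_cll (hf : Antitone f) {l : ℕ} (hl : 4 ≤ l)
    (h1 : f 0 + f 1 ≤ 2*l - 4) (h2 : f 0 ≤ l - 2 ∨ f 1 + f 2 ≤ l - 3) :
    ¬ ContainsCll (GJ t f) l := by
  classical
  rintro ⟨u, c1, c2, hc1, hc2, hl1, hl2, hshare⟩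
  -- if some cycle has exactly one inl vertex, then f 0 ≥ l - 1
  have hone : ∀ (w : Fin 2) (A : Finset (St t f)),
      (∀ x ∈ A, ∀ y ∈ A, x.1 = y.1) → A.card = l - 1 → l - 1 ≤ f 0 := by
    intro w A hA hcA
    obtain ⟨x0, hx0⟩ : A.Nonempty := Finset.card_pos.1 (by omega)
    have := card_le_capacity A x0.1 (fun y hy => hA y hy x0 hx0)
    have := hf (Nat.zero_le (x0.1 : ℕ))
    omega
  rcases cycle_structure hl c1 hc1 hl1 with ⟨w1, A1, hA1, hcA1, hs1⟩ |
      ⟨w, w', A2, B2, hww', hA2, hB2, hd3, hc2', hs2⟩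
  · rcases cycle_structure hl c2 hc2 hl2 with ⟨w2, A2', hA2', hcA2', hs2'⟩ |
        ⟨w, w', A2, B2, hww', hA2, hB2, hd3, hc2', hs2⟩
    · -- one-one
      have hf0 := hone w1 A1 hA1 hcA1
      -- u ∈ both supports
      have hu1 : u ∈ c1.support := c1.start_mem_support
      have hu2 : u ∈ c2.support := c2.start_mem_support
      cases hu : u with
      | inl v =>
        refine oneone_inl_bound hf hl h1 A1 A2' hA1 hA2' hcA1 hcA2' ?_
        rw [Finset.disjoint_left]
        intro x hx hx'
        have h1' : Sum.inr x ∈ c1.support := (hs1 _).2 (Or.inr ⟨x, hx, rfl⟩)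
        have h2' : Sum.inr x ∈ c2.support := (hs2' _).2 (Or.inr ⟨x, hx', rfl⟩)
        have := hshare _ h1' h2'
        rw [hu] at this
        cases this
      | inr x0 =>
        obtain (h | ⟨a, ha, haa⟩) := (hs1 _).1 hu1
        · rw [hu] at h
          cases h
        obtain (h' | ⟨b, hb, hbb⟩) := (hs2' _).1 hu2
        · rw [hu] at h'
          cases h'
        have ha' : a = x0 := Sum.inr_injective (haa.symm.trans hu)
        have hb' : b = x0 := Sum.inr_injective (hbb.symm.trans hu)
        have ha2 : x0 ∈ A1 := ha' ▸ ha
        have hb2 : x0 ∈ A2' := hb' ▸ hb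
        refine oneone_inr_bound hf hl h1 A1 A2' x0 hA1 hA2' hcA1 hcA2' ha2 hb2 ?_
        intro x hx
        rw [Finset.mem_inter] at hx
        have h1' : Sum.inr x ∈ c1.support := (hs1 _).2 (Or.inr ⟨x, hx.1, rfl⟩)
        have h2' : Sum.inr x ∈ c2.support := (hs2' _).2 (Or.inr ⟨x, hx.2, rfl⟩)
        have := hshare _ h1' h2'
        rw [hu] at this
        rw [Finset.mem_singleton]
        exact Sum.inr_injective this
    · -- c1 one-inl, c2 two-inl
      -- w1 ∈ {w, w'} so inl w1 shared, hence u = inl w1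
      have hw1 : Sum.inl w1 ∈ c1.support := (hs1 _).2 (Or.inl rfl)
      have hw1' : Sum.inl w1 ∈ c2.support := by
        rcases fin2_cases w1 w w' hww' with rfl | rfl
        · exact (hs2 _).2 (Or.inl rfl)
        · exact (hs2 _).2 (Or.inr (Or.inl rfl))
      have hu : u = Sum.inl w1 := (hshare _ hw1 hw1').symm
      have hf0 := hone w1 A1 hA1 hcA1
      have h2' : f 1 + f 2 ≤ l - 3 := by
        rcases h2 with h2 | h2
        · omega
        · exact h2
      have hdisj : ∀ (X : Finset (St t f)), (∀ x, x ∈ X → Sum.inr x ∈ c2.support) →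
          Disjoint A1 X := by
        intro X hX
        rw [Finset.disjoint_left]
        intro x hx hx'
        have hxc1 : Sum.inr x ∈ c1.support := (hs1 _).2 (Or.inr ⟨x, hx, rfl⟩)
        have := hshare _ hxc1 (hX x hx')
        rw [hu] at this
        cases this
      exact onetwo_bound hf hl h1 h2' A1 A2 B2 hA1 hA2 hB2 hcA1 hc2'
        (hdisj A2 (fun x hx => (hs2 _).2 (Or.inr (Or.inr ⟨x, Finset.mem_union_left _ hx, rfl⟩))))
        (hdisj B2 (fun x hx => (hs2 _).2 (Or.inr (Or.inr ⟨x, Finset.mem_union_right _ hx, rfl⟩))))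
        hd3
  · rcases cycle_structure hl c2 hc2 hl2 with ⟨w2, A1', hA1', hcA1', hs1'⟩ |
        ⟨v, v', A2', B2', hvv', hA2', hB2', hd3', hc2'', hs2''⟩
    · -- c1 two-inl, c2 one-inl (symmetric)
      have hw1 : Sum.inl w2 ∈ c2.support := (hs1' _).2 (Or.inl rfl)
      have hw1' : Sum.inl w2 ∈ c1.support := by
        rcases fin2_cases w2 w w' hww' with rfl | rfl
        · exact (hs2 _).2 (Or.inl rfl)
        · exact (hs2 _).2 (Or.inr (Or.inl rfl))
      have hu : u = Sum.inl w2 := (hshare _ hw1' hw1).symm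
      have hf0 := hone w2 A1' hA1' hcA1'
      have h2' : f 1 + f 2 ≤ l - 3 := by
        rcases h2 with h2 | h2
        · omega
        · exact h2
      have hdisj : ∀ (X : Finset (St t f)), (∀ x, x ∈ X → Sum.inr x ∈ c1.support) →
          Disjoint A1' X := by
        intro X hX
        rw [Finset.disjoint_left]
        intro x hx hx'
        have hxc2 : Sum.inr x ∈ c2.support := (hs1' _).2 (Or.inr ⟨x, hx, rfl⟩)
        have := hshare _ (hX x hx') hxc2
        rw [hu] at this
        cases this
      exact onetwo_bound hf hl h1 h2' A1' A2 B2 hA1' hA2 hB2 hcA1' hc2'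
        (hdisj A2 (fun x hx => (hs2 _).2 (Or.inr (Or.inr ⟨x, Finset.mem_union_left _ hx, rfl⟩))))
        (hdisj B2 (fun x hx => (hs2 _).2 (Or.inr (Or.inr ⟨x, Finset.mem_union_right _ hx, rfl⟩))))
        hd3
    · -- both two-inl: the two inl vertices of c2 are both in c1, contradiction
      have hv1 : Sum.inl v ∈ c1.support := by
        rcases fin2_cases v w w' hww' with rfl | rfl
        · exact (hs2 _).2 (Or.inl rfl)
        · exact (hs2 _).2 (Or.inr (Or.inl rfl))
      have hv2 : Sum.inl v' ∈ c1.support := by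
        rcases fin2_cases v' w w' hww' with rfl | rfl
        · exact (hs2 _).2 (Or.inl rfl)
        · exact (hs2 _).2 (Or.inr (Or.inl rfl))
      have hv1' : Sum.inl v ∈ c2.support := (hs2'' _).2 (Or.inl rfl)
      have hv2' : Sum.inl v' ∈ c2.support := (hs2'' _).2 (Or.inr (Or.inl rfl))
      have e1 := hshare _ hv1 hv1'
      have e2 := hshare _ hv2 hv2'
      rw [← e2] at e1
      exact hvv' (Sum.inl_injective e1)

end counting

section construction
variable {t : ℕ} {f : ℕ → ℕ}

set_option maxHeartbeats 1000000 in
lemma constr_gen {l : ℕ} (hl : 4 ≤ l) (hft : ∀ i, 1 ≤ f i ↔ i < t)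
    (p q o s c : ℕ) (hsc : s + c = l - 2) (hf0 : l - 1 ≤ f 0)
    (hp : o + s ≤ f p) (hq : c ≤ f q)
    (hdA : p = 0 → l - 1 ≤ o)
    (hqA : c ≠ 0 → q ≠ 0 ∧ q ≠ p) :
    ContainsCll (GJ t f) l := by
  classical
  have ht0 : 0 < t := (hft 0).1 (by omega)
  set isl : Fin 2 ⊕ St t f → ℕ := Sum.elim (fun w => (w : ℕ)) (fun _ => 2) with hisl
  set cpN : Fin 2 ⊕ St t f → ℕ := Sum.elim (fun _ => 0) (fun x : St t f => (x.1 : ℕ)) with hcpN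
  set dN : Fin 2 ⊕ St t f → ℕ := Sum.elim (fun _ => 0) (fun x : St t f => (x.2 : ℕ)) with hdN
  set g1 : ℕ → Fin 2 ⊕ St t f := fun k =>
    if hk : 1 ≤ k ∧ k ≤ l - 1 then
      Sum.inr ⟨⟨0, ht0⟩, (⟨k - 1, by omega⟩ : Fin (f 0))⟩
    else Sum.inl 0 with hg1
  set g2 : ℕ → Fin 2 ⊕ St t f := fun k =>
    if hk : 1 ≤ k ∧ k ≤ s then
      Sum.inr ⟨⟨p, (hft p).1 (by omega)⟩, (⟨o + k - 1, by omega⟩ : Fin (f p))⟩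
    else if hk2 : k = s + 1 then Sum.inl 1
    else if hk3 : s + 2 ≤ k ∧ k ≤ l - 1 then
      Sum.inr ⟨⟨q, (hft q).1 (by omega)⟩, (⟨k - s - 2, by omega⟩ : Fin (f q))⟩
    else Sum.inl 0 with hg2
  have E0 : g1 0 = Sum.inl 0 := by
    simp only [hg1]
    rw [dif_neg (by omega)]
  have E1 : ∀ k (h : 1 ≤ k ∧ k ≤ l - 1),
      g1 k = Sum.inr ⟨⟨0, ht0⟩, (⟨k - 1, by omega⟩ : Fin (f 0))⟩ := by
    intro k h
    simp only [hg1]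
    rw [dif_pos h]
  have F0 : g2 0 = Sum.inl 0 := by
    simp only [hg2]
    rw [dif_neg (by omega), dif_neg (by omega), dif_neg (by omega)]
  have F1 : ∀ k (h : 1 ≤ k ∧ k ≤ s),
      g2 k = Sum.inr ⟨⟨p, (hft p).1 (by omega)⟩, (⟨o + k - 1, by omega⟩ : Fin (f p))⟩ := by
    intro k h
    simp only [hg2]
    rw [dif_pos h]
  have F2 : g2 (s+1) = Sum.inl 1 := by
    simp only [hg2]
    rw [dif_neg (by omega)]
    simp
  have F3 : ∀ k (h : s + 2 ≤ k ∧ k ≤ l - 1),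
      g2 k = Sum.inr ⟨⟨q, (hft q).1 (by omega)⟩, (⟨k - s - 2, by omega⟩ : Fin (f q))⟩ := by
    intro k h
    simp only [hg2]
    rw [dif_neg (by omega), dif_neg (by omega), dif_pos h]
  -- cycle 1
  have adj1 : ∀ k, k < l - 1 → (GJ t f).Adj (g1 k) (g1 (k+1)) := by
    intro k hk
    rcases Nat.eq_zero_or_pos k with rfl | hk0
    · rw [E0, E1 1 ⟨le_refl 1, by omega⟩]
      exact adj_inl_inr _ _
    · rw [E1 k ⟨by omega, by omega⟩, E1 (k+1) ⟨by omega, by omega⟩]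
      exact adj_inr_inr_iff.2 ⟨rfl, Or.inl (show k - 1 + 1 = k + 1 - 1 by omega)⟩
  have wrap1 : (GJ t f).Adj (g1 0) (g1 (l-1)) := by
    rw [E0, E1 (l-1) ⟨by omega, le_refl _⟩]
    exact adj_inl_inr _ _
  have inj1 : ∀ k, k ≤ l - 1 → ∀ m, m ≤ l - 1 → g1 k = g1 m → k = m := by
    intro k hk m hm he
    rcases Nat.eq_zero_or_pos k with rfl | hk0 <;> rcases Nat.eq_zero_or_pos m with rfl | hm0
    · rfl
    · rw [E0, E1 m ⟨by omega, hm⟩] at he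
      cases he
    · rw [E0, E1 k ⟨by omega, hk⟩] at he
      cases he
    · rw [E1 k ⟨by omega, hk⟩, E1 m ⟨by omega, hm⟩] at he
      have hd : k - 1 = m - 1 := congrArg dN he
      omega
  -- cycle 2
  have adj2 : ∀ k, k < l - 1 → (GJ t f).Adj (g2 k) (g2 (k+1)) := by
    intro k hk
    rcases Nat.eq_zero_or_pos k with rfl | hk0
    · rcases Nat.eq_zero_or_pos s with hs | hs
      · rw [F0, show (0:ℕ) + 1 = s + 1 by omega, F2]
        exact adj_inl_inl (by decide)
      · rw [F0, F1 1 ⟨le_refl 1, by omega⟩]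
        exact adj_inl_inr _ _
    rcases Nat.lt_or_ge k s with hks | hks
    · rw [F1 k ⟨by omega, by omega⟩, F1 (k+1) ⟨by omega, by omega⟩]
      exact adj_inr_inr_iff.2 ⟨rfl, Or.inl (show o + k - 1 + 1 = o + (k+1) - 1 by omega)⟩
    rcases Nat.eq_or_lt_of_le hks with hks' | hks'
    · have h1 := F1 k ⟨by omega, by omega⟩
      have h2 : g2 (k+1) = Sum.inl 1 := by rw [show k + 1 = s + 1 by omega]; exact F2
      rw [h1, h2]
      exact adj_inr_inl _ _
    rcases Nat.eq_or_lt_of_le hks' with hks'' | hks''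
    · rw [show k = s + 1 from hks''.symm, F2, F3 (s+2) ⟨le_refl _, by omega⟩]
      exact adj_inl_inr _ _
    · rw [F3 k ⟨by omega, by omega⟩, F3 (k+1) ⟨by omega, by omega⟩]
      exact adj_inr_inr_iff.2 ⟨rfl, Or.inl (show k - s - 2 + 1 = k + 1 - s - 2 by omega)⟩
  have wrap2 : (GJ t f).Adj (g2 0) (g2 (l-1)) := by
    rcases Nat.eq_zero_or_pos c with hc | hc
    · rw [F0, show l - 1 = s + 1 by omega, F2]
      exact adj_inl_inl (by decide)
    · rw [F0, F3 (l-1) ⟨by omega, le_refl _⟩]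
      exact adj_inl_inr _ _
  have inj2 : ∀ k, k ≤ l - 1 → ∀ m, m ≤ l - 1 → g2 k = g2 m → k = m := by
    have reg : ∀ k, k ≤ l - 1 → k = 0 ∨ (1 ≤ k ∧ k ≤ s) ∨ k = s + 1 ∨
        (s + 2 ≤ k ∧ k ≤ l - 1) := by intro k hk; omega
    intro k hk m hm he
    rcases reg k hk with rfl | hkB | rfl | hkC <;> rcases reg m hm with rfl | hmB | rfl | hmC
    · rfl
    · rw [F0, F1 m hmB] at he; cases he
    · rw [F0, F2] at he
      have := congrArg isl he
      simp [hisl] at this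
    · rw [F0, F3 m hmC] at he; cases he
    · rw [F0, F1 k hkB] at he; cases he
    · rw [F1 k hkB, F1 m hmB] at he
      have hd : o + k - 1 = o + m - 1 := congrArg dN he
      omega
    · rw [F1 k hkB, F2] at he; cases he
    · rw [F1 k hkB, F3 m hmC] at he
      have hcp : p = q := congrArg cpN he
      have := (hqA (by omega)).2
      exact absurd hcp.symm this
    · rw [F0, F2] at he
      have := congrArg isl he
      simp [hisl] at this
    · rw [F2, F1 m hmB] at he; cases he
    · rfl
    · rw [F2, F3 m hmC] at he; cases he
    · rw [F0, F3 k hkC] at he; cases he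
    · rw [F3 k hkC, F1 m hmB] at he
      have hcp : q = p := congrArg cpN he
      have := (hqA (by omega)).2
      exact absurd hcp this
    · rw [F3 k hkC, F2] at he; cases he
    · rw [F3 k hkC, F3 m hmC] at he
      have hd : k - s - 2 = m - s - 2 := congrArg dN he
      omega
  -- intersection
  have inter : ∀ k, k ≤ l - 1 → ∀ m, m ≤ l - 1 → g1 k = g2 m → g1 k = Sum.inl 0 := by
    have reg : ∀ m, m ≤ l - 1 → m = 0 ∨ (1 ≤ m ∧ m ≤ s) ∨ m = s + 1 ∨
        (s + 2 ≤ m ∧ m ≤ l - 1) := by intro m hm; omega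
    intro k hk m hm he
    rcases Nat.eq_zero_or_pos k with rfl | hk0
    · exact E0
    rcases reg m hm with rfl | hmB | rfl | hmC
    · rw [E1 k ⟨by omega, hk⟩, F0] at he; cases he
    · exfalso
      rw [E1 k ⟨by omega, hk⟩, F1 m hmB] at he
      have hcp : (0:ℕ) = p := congrArg cpN he
      have hd : k - 1 = o + m - 1 := congrArg dN he
      have := hdA hcp.symm
      omega
    · rw [E1 k ⟨by omega, hk⟩, F2] at he; cases he
    · exfalso
      rw [E1 k ⟨by omega, hk⟩, F3 m hmC] at he
      have hcp : (0:ℕ) = q := congrArg cpN he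
      exact (hqA (by omega)).1 hcp.symm
  obtain ⟨c1, hcyc1, hlen1, hsup1⟩ :=
    cycle_of_fn (G := GJ t f) g1 (l-1) (by omega) adj1 wrap1 inj1
  obtain ⟨c2, hcyc2, hlen2, hsup2⟩ :=
    cycle_of_fn (G := GJ t f) g2 (l-1) (by omega) adj2 wrap2 inj2
  refine ⟨Sum.inl 0, c1.copy E0 E0, c2.copy F0 F0,
    (Walk.isCycle_copy c1 E0).2 hcyc1, (Walk.isCycle_copy c2 F0).2 hcyc2,
    by rw [Walk.length_copy, hlen1]; omega, by rw [Walk.length_copy, hlen2]; omega, ?_⟩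
  intro v hv1 hv2
  rw [Walk.support_copy] at hv1 hv2
  obtain ⟨k, hkle, hkv⟩ := (hsup1 v).1 hv1
  obtain ⟨m, hmle, hmv⟩ := (hsup2 v).1 hv2
  rw [← hkv]
  exact inter k hkle m hmle (hkv.trans hmv.symm)

end construction


theorem stmt7 (l t : ℕ) (hl : 4 ≤ l) (f : ℕ → ℕ) (hf : Antitone f)
    (hft : ∀ i, 1 ≤ f i ↔ i < t) :
    (¬ ContainsCll (joinG (⊤ : SimpleGraph (Fin 2)) (pathsUnion t f)) l) ↔
      ((f 0 + f 1 ≤ 2 * l - 4 ∧ f 0 ≤ l - 2) ∨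
        (f 0 + f 1 ≤ 2 * l - 4 ∧ f 1 + f 2 ≤ l - 3)) := by
  constructor
  · intro hnc
    by_contra hcon
    push_neg at hcon
    obtain ⟨hc1, hc2⟩ := hcon
    rcases Nat.lt_or_ge (2*l-4) (f 0 + f 1) with hbig | hle
    · have hf10 : f 1 ≤ f 0 := hf (by omega)
      have hf0 : l - 1 ≤ f 0 := by omega
      exact hnc (constr_gen hl hft 0 1 (l-1)
        (min (f 0 - (l-1)) (l-2)) (l - 2 - min (f 0 - (l-1)) (l-2))
        (by omega) hf0 (by omega) (by omega)
        (fun _ => le_refl _) (fun hc => ⟨by omega, by omega⟩))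
    · have h2a := hc1 hle
      have h2b := hc2 hle
      exact hnc (constr_gen hl hft 1 2 0
        (min (f 1) (l-2)) (l - 2 - min (f 1) (l-2))
        (by omega) (by omega) (by omega) (by omega)
        (fun h => by omega) (fun hc => ⟨by omega, by omega⟩))
  · rintro (⟨h1, h2⟩ | ⟨h1, h2⟩)
    · exact no_cll hf hl h1 (Or.inl h2)
    · exact no_cll hf hl h1 (Or.inr h2)
end

section
/- Let l ≥ 4 and let H be a disjoint union of paths whose longest path has order n₁(H) ≥ 2l−3. Then K_2 + H contains C_{l,l} as a subgraph. -/
open SimpleGraph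

section Aux

variable (t : ℕ) (f : ℕ → ℕ) (ht : 1 ≤ t) (hn : 0 < f 0)

abbrev JG := joinG (⊤ : SimpleGraph (Fin 2)) (pathsUnion t f)

def pv (j : ℕ) : Fin 2 ⊕ (Σ i : Fin t, Fin (f i.1)) :=
  Sum.inr ⟨⟨0, ht⟩, ⟨j % f 0, Nat.mod_lt _ hn⟩⟩

lemma pv_inj {i j : ℕ} (hi : i < f 0) (hj : j < f 0)
    (h : pv t f ht hn i = pv t f ht hn j) : i = j := by
  simp only [pv, Sum.inr.injEq, Sigma.mk.inj_iff, heq_eq_eq, Fin.mk.injEq, true_and] at h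
  rwa [Nat.mod_eq_of_lt hi, Nat.mod_eq_of_lt hj] at h

lemma adj_pv {j : ℕ} (h : j + 1 < f 0) :
    (JG t f).Adj (pv t f ht hn j) (pv t f ht hn (j + 1)) := by
  show (pathsUnion t f).Adj _ _
  refine ⟨rfl, Or.inl ?_⟩
  simp only
  rw [Nat.mod_eq_of_lt (by omega), Nat.mod_eq_of_lt h]

lemma adj_pv_inl {j : ℕ} (x : Fin 2) :
    (JG t f).Adj (pv t f ht hn j) (Sum.inl x) := by trivial

lemma adj_inl_pv {j : ℕ} (x : Fin 2) :
    (JG t f).Adj (Sum.inl x) (pv t f ht hn j) := by trivial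

def pw : (a k : ℕ) → (h : a + k < f 0) →
    (JG t f).Walk (pv t f ht hn a) (pv t f ht hn (a + k))
  | _, 0, _ => Walk.nil
  | a, k + 1, h => (pw a k (by omega)).concat (adj_pv t f ht hn (by omega))

lemma support_pw (a k : ℕ) (h : a + k < f 0) :
    (pw t f ht hn a k h).support = (List.range (k + 1)).map (fun i => pv t f ht hn (a + i)) := by
  induction k with
  | zero => rw [List.range_succ]; simp [pw]
  | succ k ih =>
    rw [pw, Walk.support_concat, ih (by omega)]
    simp [List.range_succ]

lemma length_pw (a k : ℕ) (h : a + k < f 0) : (pw t f ht hn a k h).length = k := by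
  induction k with
  | zero => simp [pw]
  | succ k ih => rw [pw, Walk.length_concat, ih (by omega)]

lemma inl_not_mem_pw (a k : ℕ) (h : a + k < f 0) (x : Fin 2) :
    Sum.inl x ∉ (pw t f ht hn a k h).support := by
  rw [support_pw]
  simp [pv]

end Aux

theorem stmt18 (l t : ℕ) (hl : 4 ≤ l) (ht : 1 ≤ t) (f : ℕ → ℕ) (hf : Antitone f)
    (h1 : 2 * l - 3 ≤ f 0) :
    ContainsCll (joinG (⊤ : SimpleGraph (Fin 2)) (pathsUnion t f)) l := by
  obtain ⟨m, rfl⟩ : ∃ m, l = m + 4 := ⟨l - 4, by omega⟩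
  have hn : 0 < f 0 := by omega
  have hN : 2 * m + 5 ≤ f 0 := by omega
  set u' : Fin 2 ⊕ (Σ i : Fin t, Fin (f i.1)) := Sum.inl 0 with hu'
  set u'' : Fin 2 ⊕ (Σ i : Fin t, Fin (f i.1)) := Sum.inl 1 with hu''
  have hne : u' ≠ u'' := by simp [hu', hu'']
  -- first cycle
  let W1 : (JG t f).Walk (pv t f ht hn 0) u' :=
    (pw t f ht hn 0 (m + 2) (by omega)).concat (adj_pv_inl t f ht hn 0)
  let c₁ : (JG t f).Walk u' u' := Walk.cons (adj_inl_pv t f ht hn (j := 0) 0) W1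
  have hsup1 : W1.support =
      ((List.range (m + 3)).map (fun i => pv t f ht hn (0 + i))).concat u' := by
    show ((pw t f ht hn 0 (m+2) _).concat _).support = _
    rw [Walk.support_concat, support_pw, List.concat_eq_append]
  have hmap1 : ((List.range (m + 3)).map (fun i => pv t f ht hn (0 + i))).Nodup := by
    refine List.Nodup.map_on ?_ List.nodup_range
    intro x hx y hy hxy
    simp only [List.mem_range] at hx hy
    have := pv_inj t f ht hn (i := 0 + x) (j := 0 + y) (by omega) (by omega) hxy
    omega
  have hu'mem : u' ∉ (List.range (m + 3)).map (fun i => pv t f ht hn (0 + i)) := by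
    simp [hu', pv]
  have hW1path : W1.IsPath := by
    rw [Walk.isPath_def, hsup1, List.concat_eq_append, List.nodup_append]
    exact ⟨hmap1, List.nodup_singleton _, by simpa using hu'mem⟩
  have hW1edge : s(u', pv t f ht hn 0) ∉ W1.edges := by
    intro hmem
    have : W1.edges = (pw t f ht hn 0 (m+2) (by omega)).edges.concat
        s(pv t f ht hn (0 + (m+2)), u') := Walk.edges_concat _ _
    rw [this, List.concat_eq_append, List.mem_append, List.mem_singleton] at hmem
    rcases hmem with h | h
    · exact inl_not_mem_pw t f ht hn 0 (m+2) (by omega) 0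
        (Walk.fst_mem_support_of_mem_edges _ h)
    · rw [Sym2.eq_iff] at h
      rcases h with ⟨h, -⟩ | ⟨-, h⟩
      · simp [hu', pv] at h
      · have := pv_inj t f ht hn (by omega) (by omega) h
        omega
  have hc₁ : c₁.IsCycle := (Walk.cons_isCycle_iff _ _).2 ⟨hW1path, hW1edge⟩
  have hl₁ : c₁.length = m + 4 := by
    show W1.length + 1 = m + 4
    show ((pw t f ht hn 0 (m+2) _).concat _).length + 1 = m + 4
    rw [Walk.length_concat, length_pw]
  -- second cycle
  let W2 : (JG t f).Walk (pv t f ht hn (m + 3)) u' :=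
    ((((pw t f ht hn (m + 3) m (by omega)).concat
      (adj_pv_inl t f ht hn 1)).concat
      (adj_inl_pv t f ht hn (j := 2 * m + 4) 1)).concat
      (adj_pv_inl t f ht hn 0))
  let c₂ : (JG t f).Walk u' u' := Walk.cons (adj_inl_pv t f ht hn (j := m + 3) 0) W2
  have hsup2 : W2.support =
      ((((List.range (m + 1)).map (fun i => pv t f ht hn (m + 3 + i))).concat u'').concat
        (pv t f ht hn (2 * m + 4))).concat u' := by
    show ((((pw t f ht hn (m+3) m _).concat _).concat _).concat _).support = _
    rw [Walk.support_concat, Walk.support_concat, Walk.support_concat, support_pw]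
    simp only [List.concat_eq_append]
    rfl
  have hmap2 : ((List.range (m + 1)).map (fun i => pv t f ht hn (m + 3 + i))).Nodup := by
    refine List.Nodup.map_on ?_ List.nodup_range
    intro x hx y hy hxy
    simp only [List.mem_range] at hx hy
    have := pv_inj t f ht hn (i := m + 3 + x) (j := m + 3 + y) (by omega) (by omega) hxy
    omega
  have hmemmap2 : ∀ v ∈ (List.range (m + 1)).map (fun i => pv t f ht hn (m + 3 + i)),
      ∃ i, i < m + 1 ∧ v = pv t f ht hn (m + 3 + i) := by
    intro v hv
    simp only [List.mem_map, List.mem_range] at hv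
    obtain ⟨i, hi, rfl⟩ := hv
    exact ⟨i, hi, rfl⟩
  have hW2path : W2.IsPath := by
    rw [Walk.isPath_def, hsup2]
    simp only [List.concat_eq_append, List.append_assoc, List.singleton_append]
    rw [List.nodup_append]
    refine ⟨hmap2, ?_, ?_⟩
    · refine List.nodup_cons.2 ⟨?_, List.nodup_cons.2 ⟨?_, List.nodup_singleton _⟩⟩
      · simp [hu'', hu', pv]
      · simp [hu', pv]
    · intro v hv w hv' hvw
      subst hvw
      obtain ⟨i, hi, rfl⟩ := hmemmap2 v hv
      simp only [List.cons_append, List.nil_append, List.mem_cons,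
        List.not_mem_nil, or_false] at hv'
      rcases hv' with h | h | h
      · simp [hu'', pv] at h
      · have := pv_inj t f ht hn (i := m + 3 + i) (j := 2 * m + 4) (by omega) (by omega) h
        omega
      · simp [hu', pv] at h
  have hW2edge : s(u', pv t f ht hn (m + 3)) ∉ W2.edges := by
    intro hmem
    have : W2.edges = (((pw t f ht hn (m+3) m (by omega)).edges.concat
        s(pv t f ht hn (m + 3 + m), u'')).concat
        s(u'', pv t f ht hn (2 * m + 4))).concat
        s(pv t f ht hn (2 * m + 4), u') := by
      show ((((pw t f ht hn (m+3) m _).concat _).concat _).concat _).edges = _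
      rw [Walk.edges_concat, Walk.edges_concat, Walk.edges_concat]
    rw [this] at hmem
    simp only [List.concat_eq_append, List.append_assoc, List.cons_append, List.nil_append,
      List.singleton_append, List.mem_append, List.mem_cons, List.not_mem_nil,
      or_false] at hmem
    rcases hmem with h | h | h | h
    · exact inl_not_mem_pw t f ht hn (m+3) m (by omega) 0
        (Walk.fst_mem_support_of_mem_edges _ h)
    · rw [Sym2.eq_iff] at h
      rcases h with ⟨h, -⟩ | ⟨h, -⟩
      · simp [hu', pv] at h
      · simp [hu', hu''] at h
    · rw [Sym2.eq_iff] at h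
      rcases h with ⟨h, -⟩ | ⟨h, -⟩
      · simp [hu', hu''] at h
      · simp [hu', pv] at h
    · rw [Sym2.eq_iff] at h
      rcases h with ⟨h, -⟩ | ⟨-, h⟩
      · simp [hu', pv] at h
      · have := pv_inj t f ht hn (i := m + 3) (j := 2 * m + 4) (by omega) (by omega) h
        omega
  have hc₂ : c₂.IsCycle := (Walk.cons_isCycle_iff _ _).2 ⟨hW2path, hW2edge⟩
  have hl₂ : c₂.length = m + 4 := by
    show W2.length + 1 = m + 4
    show ((((pw t f ht hn (m+3) m _).concat _).concat _).concat _).length + 1 = m + 4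
    rw [Walk.length_concat, Walk.length_concat, Walk.length_concat, length_pw]
  refine ⟨u', c₁, c₂, hc₁, hc₂, hl₁, hl₂, ?_⟩
  intro v hv1 hv2
  have hv1' : v = u' ∨ v ∈ W1.support := by
    simpa [c₁] using hv1
  have hv2' : v = u' ∨ v ∈ W2.support := by
    simpa [c₂] using hv2
  rcases hv1' with rfl | hv1'
  · rfl
  rcases hv2' with rfl | hv2'
  · rfl
  rw [hsup1] at hv1'
  rw [hsup2] at hv2'
  simp only [List.concat_eq_append, List.append_assoc, List.cons_append, List.nil_append,
    List.singleton_append, List.mem_append, List.mem_cons, List.mem_map, List.mem_range,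
    List.not_mem_nil, or_false] at hv1' hv2'
  rcases hv1' with ⟨i, hi, rfl⟩ | rfl
  · rcases hv2' with ⟨j, hj, h⟩ | h | h | h
    · have := pv_inj t f ht hn (i := 0 + i) (j := m + 3 + j) (by omega) (by omega) h.symm
      omega
    · simp [hu'', pv] at h
    · have := pv_inj t f ht hn (i := 0 + i) (j := 2 * m + 4) (by omega) (by omega) h
      omega
    · simp [hu', pv] at h
  · rfl
end
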